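/- arXiv:1106.2342 — 5 statements merged into one kernel-verified Lean document; each statement's English description precedes it below -/
import Mathlib

section
/- If X has a multivariate ℓ1-norm symmetric distribution with generating law ν, i.e., X = R·U in law with R ≥ 0 with law ν and U uniform on the simplex, independent of R, then for x ≥ 0 the marginal survival function of each coordinate is F̄(x) = ∫_x^∞ (1 - x/r)^{n-1} ν(dr). -/
open MeasureTheory ProbabilityTheory Real Set

namespace ASPaux

instance : IsProbabilityMeasure (expMeasure 1) := isProbabilityMeasure_expMeasure one_pos

lemma meas1 (c : ℝ) : Measurable fun y : ℝ => ENNReal.ofReal (exp (-(c * y))) :=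
  (Real.measurable_exp.comp ((measurable_id.const_mul c).neg)).ennreal_ofReal

lemma lint_exp_Ioi {b : ℝ} (hb : 0 < b) :
    ∫⁻ y in Ioi (0:ℝ), ENNReal.ofReal (exp (-(b * y))) = ENNReal.ofReal (1 / b) := by
  rw [← ofReal_integral_eq_lintegral_ofReal]
  · congr 1
    have h := integral_comp_mul_left_Ioi (fun y => exp (-y)) 0 hb
    simp only [mul_zero, integral_exp_neg_Ioi, neg_zero, exp_zero, smul_eq_mul, mul_one] at h
    rw [h, one_div]
  · simpa only [neg_mul, IntegrableOn] using exp_neg_integrableOn_Ioi 0 hb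
  · exact Filter.Eventually.of_forall fun y => (exp_pos _).le

lemma expMeasure_eq : expMeasure 1 = (volume : Measure ℝ).withDensity (exponentialPDF 1) := rfl

lemma exp_laplace {c : ℝ} (hc : 0 ≤ c) :
    ∫⁻ y, ENNReal.ofReal (exp (-(c * y))) ∂(expMeasure 1) = ENNReal.ofReal (1 / (1 + c)) := by
  have hpdf : Measurable (exponentialPDF 1) := (measurable_exponentialPDFReal 1).ennreal_ofReal
  rw [expMeasure_eq, lintegral_withDensity_eq_lintegral_mul _ hpdf (meas1 c)]
  have h1 : ∫⁻ y, ((exponentialPDF 1) * fun y => ENNReal.ofReal (exp (-(c * y)))) y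
      = ∫⁻ y in Ioi (0:ℝ), ENNReal.ofReal (exp (-((1 + c) * y))) := by
    rw [← lintegral_add_compl
        (f := (exponentialPDF 1) * fun y => ENNReal.ofReal (exp (-(c * y))))
        (measurableSet_Ioi (a := (0:ℝ)))]
    have h2 : ∫⁻ y in (Ioi (0:ℝ))ᶜ,
        ((exponentialPDF 1) * fun y => ENNReal.ofReal (exp (-(c * y)))) y = 0 := by
      rw [compl_Ioi, ← restrict_Iio_eq_restrict_Iic]
      rw [setLIntegral_congr_fun_ae measurableSet_Iio (g := fun _ => 0)]
      · simp
      · exact Filter.Eventually.of_forall fun y (hy : y < 0) => by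
          simp [exponentialPDF_of_neg hy]
    have h3 : ∫⁻ y in Ioi (0:ℝ),
        ((exponentialPDF 1) * fun y => ENNReal.ofReal (exp (-(c * y)))) y
        = ∫⁻ y in Ioi (0:ℝ), ENNReal.ofReal (exp (-((1 + c) * y))) := by
      refine setLIntegral_congr_fun_ae measurableSet_Ioi
        (Filter.Eventually.of_forall fun y (hy : 0 < y) => ?_)
      simp only [Pi.mul_apply, exponentialPDF_of_nonneg hy.le]
      rw [← ENNReal.ofReal_mul (by positivity), one_mul, ← exp_add]
      ring_nf
    rw [h2, h3, add_zero]
  rw [h1, lint_exp_Ioi (by linarith)]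

lemma measSum (m : ℕ) : Measurable fun e : Fin m → ℝ => ∑ j, e j :=
  Finset.measurable_sum _ fun j _ => measurable_pi_apply j

lemma pi_laplace (m : ℕ) {c : ℝ} (hc : 0 ≤ c) :
    ∫⁻ e : Fin m → ℝ, ENNReal.ofReal (exp (-(c * ∑ j, e j)))
        ∂(Measure.pi fun _ : Fin m => expMeasure 1)
      = ENNReal.ofReal (1 / (1 + c)) ^ m := by
  induction m with
  | zero => simp
  | succ m ih =>
      have mp := measurePreserving_piFinSuccAbove (fun _ : Fin (m+1) => expMeasure 1) 0
      have hf : Measurable fun p : ℝ × (Fin m → ℝ) =>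
          ENNReal.ofReal (exp (-(c * (p.1 + ∑ j, p.2 j)))) :=
        (Real.measurable_exp.comp
          (((measurable_fst.add ((measSum m).comp measurable_snd)).const_mul c).neg)).ennreal_ofReal
      have key : ∫⁻ e : Fin (m+1) → ℝ, ENNReal.ofReal (exp (-(c * ∑ j, e j)))
            ∂(Measure.pi fun _ => expMeasure 1)
          = ∫⁻ p : ℝ × (Fin m → ℝ), ENNReal.ofReal (exp (-(c * (p.1 + ∑ j, p.2 j))))
            ∂((expMeasure 1).prod (Measure.pi fun _ : Fin m => expMeasure 1)) := by
        rw [← mp.lintegral_comp hf]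
        refine lintegral_congr fun e => ?_
        congr 2
        rw [Fin.sum_univ_succAbove (fun j => e j) 0]
        rfl
      rw [key]
      have hsplit : ∀ p : ℝ × (Fin m → ℝ),
          ENNReal.ofReal (exp (-(c * (p.1 + ∑ j, p.2 j))))
            = ENNReal.ofReal (exp (-(c * p.1))) * ENNReal.ofReal (exp (-(c * ∑ j, p.2 j))) := by
        intro p
        rw [← ENNReal.ofReal_mul (exp_pos _).le, ← exp_add]
        ring_nf
      have hg : Measurable fun e : Fin m → ℝ => ENNReal.ofReal (exp (-(c * ∑ j, e j))) :=
        (Real.measurable_exp.comp (((measSum m).const_mul c).neg)).ennreal_ofReal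
      calc ∫⁻ p : ℝ × (Fin m → ℝ), ENNReal.ofReal (exp (-(c * (p.1 + ∑ j, p.2 j))))
            ∂((expMeasure 1).prod (Measure.pi fun _ : Fin m => expMeasure 1))
          = ∫⁻ p : ℝ × (Fin m → ℝ), (fun y => ENNReal.ofReal (exp (-(c * y)))) p.1
              * (fun e => ENNReal.ofReal (exp (-(c * ∑ j, e j)))) p.2
            ∂((expMeasure 1).prod (Measure.pi fun _ : Fin m => expMeasure 1)) :=
            lintegral_congr fun p => hsplit p
        _ = (∫⁻ y, ENNReal.ofReal (exp (-(c * y))) ∂(expMeasure 1))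
              * ∫⁻ e : Fin m → ℝ, ENNReal.ofReal (exp (-(c * ∑ j, e j)))
                ∂(Measure.pi fun _ : Fin m => expMeasure 1) :=
            lintegral_prod_mul (meas1 c).aemeasurable hg.aemeasurable
        _ = ENNReal.ofReal (1 / (1 + c)) ^ (m + 1) := by
            rw [exp_laplace hc, ih, pow_succ]; ring

lemma ae_pos (m : ℕ) :
    ∀ᵐ e : Fin m → ℝ ∂(Measure.pi fun _ : Fin m => expMeasure 1), ∀ j, 0 < e j := by
  rw [ae_all_iff]
  intro j
  have h0 : expMeasure 1 (Iic (0:ℝ)) = 0 := by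
    rw [expMeasure_eq, withDensity_apply _ measurableSet_Iic,
      ← restrict_Iio_eq_restrict_Iic]
    exact lintegral_exponentialPDF_of_nonpos le_rfl
  have h1 : (Measure.pi fun _ : Fin m => expMeasure 1) (Function.eval j ⁻¹' (Iic 0)) = 0 :=
    Measure.pi_eval_preimage_null _ h0
  refine ae_iff.2 ?_
  simp only [not_lt]; exact h1

end ASPaux

namespace ASPaux
open MeasureTheory ProbabilityTheory Real Set

lemma exp_survival {c : ℝ} (hc : 0 ≤ c) :
    expMeasure 1 (Ioi c) = ENNReal.ofReal (exp (-c)) := by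
  have hIic : expMeasure 1 (Iic c) = ENNReal.ofReal (1 - exp (-c)) := by
    rw [expMeasure_eq, withDensity_apply _ measurableSet_Iic,
      lintegral_exponentialPDF_eq_antiDeriv one_pos, if_pos hc, one_mul]
  have hle : exp (-c) ≤ 1 := exp_le_one_iff.2 (by linarith)
  rw [← compl_Iic, measure_compl measurableSet_Iic (measure_ne_top _ _), measure_univ, hIic,
    ← ENNReal.ofReal_one, ← ENNReal.ofReal_sub _ (by linarith)]
  norm_num

lemma simplex_survival (m : ℕ) (i : Fin (m+1)) {t : ℝ} (ht0 : 0 ≤ t) (ht1 : t < 1) :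
    (Measure.pi fun _ : Fin (m+1) => expMeasure 1) {e | t * ∑ j, e j < e i}
      = ENNReal.ofReal ((1 - t) ^ m) := by
  set c := t / (1 - t) with hcdef
  have h1t : 0 < 1 - t := by linarith
  have hc : 0 ≤ c := div_nonneg ht0 h1t.le
  have mp := measurePreserving_piFinSuccAbove (fun _ : Fin (m+1) => expMeasure 1) i
  have hA : MeasurableSet {p : ℝ × (Fin m → ℝ) | c * ∑ j, p.2 j < p.1} :=
    measurableSet_lt (((measSum m).comp measurable_snd).const_mul c) measurable_fst
  have hpre : {e : Fin (m+1) → ℝ | t * ∑ j, e j < e i}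
      = (MeasurableEquiv.piFinSuccAbove (fun _ => ℝ) i) ⁻¹' {p | c * ∑ j, p.2 j < p.1} := by
    ext e
    simp only [mem_setOf_eq, mem_preimage, MeasurableEquiv.piFinSuccAbove_apply,
      Fin.insertNthEquiv_symm_apply, Fin.removeNth]
    rw [Fin.sum_univ_succAbove (fun j => e j) i]
    set a := e i
    set s := ∑ j, e (i.succAbove j)
    have hcs : c * s = (t * s) / (1 - t) := by rw [hcdef]; ring
    rw [hcs, div_lt_iff₀ h1t]
    constructor
    · intro h; nlinarith
    · intro h; nlinarith
  rw [hpre, mp.measure_preimage hA.nullMeasurableSet, Measure.prod_apply_symm hA]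
  have hslice : ∀ s : Fin m → ℝ,
      ((fun x => (x, s)) ⁻¹' {p : ℝ × (Fin m → ℝ) | c * ∑ j, p.2 j < p.1}) = Ioi (c * ∑ j, s j) :=
    fun s => rfl
  simp_rw [hslice]
  have hcongr : ∀ᵐ s : Fin m → ℝ ∂(Measure.pi fun _ : Fin m => expMeasure 1),
      expMeasure 1 (Ioi (c * ∑ j, s j)) = ENNReal.ofReal (exp (-(c * ∑ j, s j))) := by
    filter_upwards [ae_pos m] with s hs
    exact exp_survival (mul_nonneg hc (Finset.sum_nonneg fun j _ => (hs j).le))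
  rw [lintegral_congr_ae hcongr, pi_laplace m hc]
  have h1 : 1 / (1 + c) = 1 - t := by
    rw [hcdef]; field_simp; ring
  rw [h1, ← ENNReal.ofReal_pow h1t.le]

end ASPaux

open MeasureTheory ProbabilityTheory

/-- If `X = R · U` with `R ≥ 0` of law `ν` independent of `U`, which is uniformly
distributed on the unit simplex (i.e. `U = E/‖E‖` for i.i.d. exponential `E`), then the
marginal survival function of each coordinate is `F̄(x) = ∫_x^∞ (1 - x/r)^(n-1) ν(dr)`. -/
theorem asp_l1_symmetric_marginal_survival
    {Ω : Type*} [MeasurableSpace Ω] (μ : Measure Ω) [IsProbabilityMeasure μ]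
    (n : ℕ) (hn : 2 ≤ n) (ν : Measure ℝ) [IsProbabilityMeasure ν]
    (R : Ω → ℝ) (U : Ω → Fin n → ℝ)
    (hR : Measure.map R μ = ν) (hRnn : ∀ᵐ ω ∂μ, 0 ≤ R ω)
    (hU : Measure.map U μ =
      Measure.map (fun e (i : Fin n) => e i / ∑ j, e j)
        (Measure.pi fun _ : Fin n => expMeasure 1))
    (hindep : IndepFun R U μ) :
    ∀ x : ℝ, 0 ≤ x → ∀ i : Fin n,
      μ {ω | x < R ω * U ω i}
        = ∫⁻ r in Set.Ioi x, ENNReal.ofReal ((1 - x / r) ^ (n - 1)) ∂ν := by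
  obtain ⟨m, rfl⟩ : ∃ m, n = m + 1 := ⟨n - 1, (Nat.succ_pred_eq_of_pos (by omega)).symm⟩
  intro x hx i
  set piE : Measure (Fin (m+1) → ℝ) := Measure.pi fun _ : Fin (m+1) => expMeasure 1 with hpiEdef
  set F : (Fin (m+1) → ℝ) → (Fin (m+1) → ℝ) := fun e j => e j / ∑ k, e k with hF
  set q : (Fin (m+1) → ℝ) → ℝ := fun e => e i / ∑ k, e k with hq
  have hFm : Measurable F :=
    measurable_pi_lambda _ fun j => (measurable_pi_apply j).div (ASPaux.measSum (m+1))
  have hqm : Measurable q := (measurable_pi_apply i).div (ASPaux.measSum (m+1))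
  -- AEMeasurability
  have hRm : AEMeasurable R μ := by
    by_contra h
    rw [Measure.map_of_not_aemeasurable h] at hR
    exact (IsProbabilityMeasure.ne_zero ν) hR.symm
  have hUm : AEMeasurable U μ := by
    by_contra h
    rw [Measure.map_of_not_aemeasurable h] at hU
    have : (Measure.map F piE) Set.univ = 1 := by
      rw [Measure.map_apply hFm MeasurableSet.univ]
      simp [hpiEdef]
    rw [← hU] at this
    simp at this
  have hUim : AEMeasurable (fun ω => U ω i) μ := (measurable_pi_apply i).comp_aemeasurable hUm
  -- law of U i
  have hρ : Measure.map (fun ω => U ω i) μ = Measure.map q piE := by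
    have h1 : Measure.map (fun ω => U ω i) μ
        = Measure.map (fun u : Fin (m+1) → ℝ => u i) (Measure.map U μ) :=
      (AEMeasurable.map_map_of_aemeasurable (measurable_pi_apply i).aemeasurable hUm).symm
    rw [h1, hU, Measure.map_map (measurable_pi_apply i) hFm]
    rfl
  -- independence of R and U i
  have hindep' : IndepFun R (fun ω => U ω i) μ :=
    hindep.comp measurable_id (measurable_pi_apply i)
  -- joint law
  have hjoint : Measure.map (fun ω => (R ω, U ω i)) μ = ν.prod (Measure.map q piE) := by
    rw [← hR, ← hρ]
    exact (indepFun_iff_map_prod_eq_prod_map_map hRm hUim).1 hindep'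
  have hset : MeasurableSet {p : ℝ × ℝ | x < p.1 * p.2} :=
    measurableSet_lt measurable_const (measurable_fst.mul measurable_snd)
  have hLHS : μ {ω | x < R ω * U ω i}
      = ∫⁻ r, (Measure.map q piE) {u | x < r * u} ∂ν := by
    have h1 : μ {ω | x < R ω * U ω i}
        = Measure.map (fun ω => (R ω, U ω i)) μ {p : ℝ × ℝ | x < p.1 * p.2} := by
      rw [Measure.map_apply_of_aemeasurable (hRm.prodMk hUim) hset]
      rfl
    rw [h1, hjoint, Measure.prod_apply hset]
    rfl
  -- the integrand
  have claimA : ∀ r : ℝ, x < r →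
      (Measure.map q piE) {u | x < r * u} = ENNReal.ofReal ((1 - x / r) ^ m) := by
    intro r hr
    have hrpos : 0 < r := lt_of_le_of_lt hx hr
    have hsu : MeasurableSet {u : ℝ | x < r * u} :=
      measurableSet_lt measurable_const (measurable_id.const_mul r)
    rw [Measure.map_apply hqm hsu]
    have hae : (q ⁻¹' {u | x < r * u}) =ᵐ[piE] {e | x / r * ∑ j, e j < e i} := by
      rw [Filter.eventuallyEq_set]
      filter_upwards [ASPaux.ae_pos (m+1)] with e hp
      have hS : 0 < ∑ j, e j := Finset.sum_pos (fun j _ => hp j) Finset.univ_nonempty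
      simp only [Set.mem_preimage, Set.mem_setOf_eq, hq]
      rw [← mul_div_assoc, lt_div_iff₀ hS, div_mul_eq_mul_div, div_lt_iff₀ hrpos, mul_comm (e i) r]
    rw [measure_congr hae, ASPaux.simplex_survival m i (div_nonneg hx hrpos.le)
      ((div_lt_one hrpos).2 hr)]
  have claimB : ∀ r : ℝ, 0 ≤ r → r ≤ x →
      (Measure.map q piE) {u | x < r * u} = 0 := by
    intro r hr0 hrx
    have hsu : MeasurableSet {u : ℝ | x < r * u} :=
      measurableSet_lt measurable_const (measurable_id.const_mul r)
    rw [Measure.map_apply hqm hsu, measure_eq_zero_iff_ae_notMem]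
    filter_upwards [ASPaux.ae_pos (m+1)] with e hp
    have hS : 0 < ∑ j, e j := Finset.sum_pos (fun j _ => hp j) Finset.univ_nonempty
    simp only [Set.mem_preimage, Set.mem_setOf_eq, not_lt, hq]
    have h1 : e i / ∑ k, e k ≤ 1 :=
      (div_le_one hS).2 (Finset.single_le_sum (f := fun j => e j) (fun j _ => (hp j).le)
        (Finset.mem_univ i))
    have h2 : 0 ≤ e i / ∑ k, e k := div_nonneg (hp i).le hS.le
    nlinarith
  -- ν is supported on nonneg reals
  have hν0 : ∀ᵐ r ∂ν, 0 ≤ r := by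
    rw [← hR, ae_map_iff hRm measurableSet_Ici]
    exact hRnn
  rw [hLHS, ← lintegral_add_compl (fun r => (Measure.map q piE) {u | x < r * u})
      (measurableSet_Ioi (a := x))]
  have hzero : ∫⁻ r in (Set.Ioi x)ᶜ, (Measure.map q piE) {u | x < r * u} ∂ν = 0 := by
    have : (fun r => (Measure.map q piE) {u | x < r * u}) =ᵐ[ν.restrict (Set.Ioi x)ᶜ]
        (fun _ => 0) := by
      rw [Filter.EventuallyEq, ae_restrict_iff' (measurableSet_Ioi (a := x)).compl]
      filter_upwards [hν0] with r hr0 hrx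
      exact claimB r hr0 (by simpa using hrx)
    rw [lintegral_congr_ae this, lintegral_zero]
  have hmain : ∫⁻ r in Set.Ioi x, (Measure.map q piE) {u | x < r * u} ∂ν
      = ∫⁻ r in Set.Ioi x, ENNReal.ofReal ((1 - x / r) ^ (m + 1 - 1)) ∂ν := by
    refine lintegral_congr_ae ?_
    rw [Filter.EventuallyEq, ae_restrict_iff' (measurableSet_Ioi (a := x))]
    refine Filter.Eventually.of_forall fun r hr => ?_
    rw [claimA r hr]
    norm_num
  rw [hzero, hmain, add_zero]
end

section
/- If X has a multivariate ℓ1-norm symmetric distribution with generating law ν, then its joint survival function satisfies P[X_1 > x_1,...,X_n > x_n] = ∫_{‖x‖}^∞ (1 - ‖x‖/r)^{n-1} ν(dr) = F̄(‖x‖) for all x ∈ ℝ_+^n, where F̄ is the one-dimensional marginal survival function and ‖x‖ = Σ_i x_i. -/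
open MeasureTheory ProbabilityTheory
open scoped ENNReal NNReal

section Aux

open Set Finset

/-- The exponential(1) pdf as an `ℝ≥0∞`-valued function. -/
noncomputable def epdf : ℝ → ℝ≥0∞ := gammaPDF 1 1

lemma epdf_eq (x : ℝ) : epdf x = ENNReal.ofReal (if 0 ≤ x then Real.exp (-x) else 0) := by
  unfold epdf
  rw [gammaPDF_eq]
  congr 1
  split_ifs with h
  · rw [Real.Gamma_one, sub_self, Real.rpow_zero, Real.one_rpow]
    simp
  · rfl

lemma epdf_meas : Measurable epdf := (measurable_gammaPDFReal 1 1).ennreal_ofReal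

lemma expMeasure_one_eq : expMeasure 1 = (volume : Measure ℝ).withDensity epdf := rfl

lemma prod_epdf_eq {n : ℕ} {v : Fin n → ℝ} (hv : ∀ i, 0 ≤ v i) :
    ∏ i, epdf (v i) = ENNReal.ofReal (Real.exp (-∑ i, v i)) := by
  have h : ∀ i ∈ Finset.univ, epdf (v i) = ENNReal.ofReal (Real.exp (-(v i))) := by
    intro i _
    rw [epdf_eq, if_pos (hv i)]
  rw [Finset.prod_congr rfl h, ← ENNReal.ofReal_prod_of_nonneg
    (fun i _ => (Real.exp_pos _).le)]
  congr 1
  rw [← Real.exp_sum]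
  congr 1
  simp

lemma expMeasure_Ioi : expMeasure 1 (Set.Ioi (0 : ℝ)) = 1 := by
  haveI : IsProbabilityMeasure (expMeasure 1) := isProbabilityMeasure_expMeasure one_pos
  have hIic : expMeasure 1 (Set.Iic (0 : ℝ)) = 0 := by
    rw [expMeasure_one_eq, withDensity_apply _ measurableSet_Iic,
      Measure.restrict_congr_set Iio_ae_eq_Iic.symm]
    exact lintegral_gammaPDF_of_nonpos le_rfl
  have h := measure_compl (μ := expMeasure 1) (s := Set.Iic (0:ℝ)) measurableSet_Iic (measure_ne_top _ _)
  rwa [Set.compl_Iic, hIic, measure_univ, tsub_zero] at h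

/-- Fubini for products of functions over a finite product measure. -/
lemma lintegral_pi_prod : ∀ (n : ℕ) (μ : Measure ℝ) [SigmaFinite μ] (g : Fin n → ℝ → ℝ≥0∞),
    (∀ i, Measurable (g i)) →
    ∫⁻ x, ∏ i, g i (x i) ∂(Measure.pi fun _ : Fin n => μ) = ∏ i, ∫⁻ t, g i t ∂μ := by
  intro n
  induction n with
  | zero =>
    intro μ _ g hg
    simp only [Finset.univ_eq_empty, Finset.prod_empty, lintegral_one]
    rw [Measure.pi_univ]
    simp
  | succ n ih =>
    intro μ _ g hg
    have hmeas : Measurable fun x : Fin (n + 1) → ℝ => ∏ i, g i (x i) :=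
      Finset.measurable_prod _ fun i _ => (hg i).comp (measurable_pi_apply i)
    have hmp := (measurePreserving_piFinSuccAbove (fun _ : Fin (n + 1) => μ) 0).symm
      (MeasurableEquiv.piFinSuccAbove (fun _ : Fin (n + 1) => ℝ) 0)
    rw [← hmp.lintegral_comp hmeas]
    have heq : ∀ p : ℝ × (Fin n → ℝ),
        (∏ i, g i (((MeasurableEquiv.piFinSuccAbove (fun _ : Fin (n + 1) => ℝ) 0).symm p) i))
          = g 0 p.1 * ∏ j : Fin n, g ((0 : Fin (n + 1)).succAbove j) (p.2 j) := by
      intro p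
      rw [Fin.prod_univ_succAbove _ 0]
      have h0 : ((MeasurableEquiv.piFinSuccAbove (fun _ : Fin (n + 1) => ℝ) 0).symm p) 0
          = p.1 := by
        simp [MeasurableEquiv.piFinSuccAbove]
      have hsa : ∀ j : Fin n,
          ((MeasurableEquiv.piFinSuccAbove (fun _ : Fin (n + 1) => ℝ) 0).symm p)
            ((0 : Fin (n + 1)).succAbove j) = p.2 j := by
        intro j
        simp [MeasurableEquiv.piFinSuccAbove]
      exact congrArg₂ (· * ·) (congrArg (g 0) h0)
        (Finset.prod_congr rfl fun j _ => by rw [hsa j])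
    simp only [heq]
    have hlpm := lintegral_prod_mul (μ := μ) (ν := Measure.pi fun _ : Fin n => μ)
      (f := g 0) (g := fun z : Fin n → ℝ => ∏ j : Fin n, g ((0 : Fin (n + 1)).succAbove j) (z j))
      ((hg 0).aemeasurable)
      ((Finset.measurable_prod Finset.univ fun j (_ : j ∈ Finset.univ) =>
        (hg _).comp (measurable_pi_apply j)).aemeasurable)
    rw [hlpm, ih μ (fun j => g ((0 : Fin (n + 1)).succAbove j)) (fun j => hg _)]
    rw [Fin.prod_univ_succAbove (fun i => ∫⁻ t, g i t ∂μ) 0]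

/-- The product of exponential measures as a density against Lebesgue. -/
lemma pi_exp_eq (n : ℕ) :
    (Measure.pi fun _ : Fin n => expMeasure 1)
      = (volume : Measure (Fin n → ℝ)).withDensity (fun e => ∏ i, epdf (e i)) := by
  haveI : IsProbabilityMeasure (expMeasure 1) := isProbabilityMeasure_expMeasure one_pos
  apply Measure.pi_eq
  intro s hs
  rw [withDensity_apply _ (MeasurableSet.univ_pi hs), ← lintegral_indicator
    (MeasurableSet.univ_pi hs)]
  have heq : (Set.univ.pi s).indicator (fun e : Fin n → ℝ => ∏ i, epdf (e i))
      = fun e => ∏ i, (s i).indicator epdf (e i) := by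
    funext e
    by_cases he : e ∈ Set.univ.pi s
    · rw [Set.indicator_of_mem he]
      exact Finset.prod_congr rfl fun i _ =>
        (Set.indicator_of_mem (he i (Set.mem_univ i)) _).symm
    · rw [Set.indicator_of_notMem he]
      have : ∃ i, e i ∉ s i := by
        by_contra hcon
        push_neg at hcon
        exact he fun i _ => hcon i
      obtain ⟨i, hi⟩ := this
      exact (Finset.prod_eq_zero (Finset.mem_univ i)
        (Set.indicator_of_notMem hi _)).symm
  rw [heq, volume_pi, lintegral_pi_prod n volume _
    (fun i => epdf_meas.indicator (hs i))]
  refine Finset.prod_congr rfl fun i _ => ?_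
  rw [lintegral_indicator (hs i), expMeasure_one_eq, withDensity_apply _ (hs i)]

end Aux

section Core

open Set Finset

/-- The key geometric computation: the probability that iid exponentials satisfy
`c i * ∑ e < e i` for all `i` equals `(1 - ∑ c) ^ (n - 1)`. -/
lemma core_lemma {n : ℕ} (hn : 1 ≤ n) (c : Fin n → ℝ) (hc : ∀ i, 0 ≤ c i)
    (hcs : ∑ i, c i < 1) :
    (Measure.pi fun _ : Fin n => expMeasure 1) {e | ∀ i, c i * ∑ j, e j < e i}
      = ENNReal.ofReal ((1 - ∑ i, c i) ^ (n - 1)) := by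
  haveI : IsProbabilityMeasure (expMeasure 1) := isProbabilityMeasure_expMeasure one_pos
  set k : ℝ := 1 - ∑ i, c i with hk_def
  have hk : 0 < k := by rw [hk_def]; linarith
  set M : Matrix (Fin n) (Fin n) ℝ :=
    k • (1 : Matrix (Fin n) (Fin n) ℝ)
      + Matrix.replicateCol Unit c * Matrix.replicateRow Unit (1 : Fin n → ℝ) with hM_def
  have hM2 : M = k • ((1 : Matrix (Fin n) (Fin n) ℝ)
      + Matrix.replicateCol Unit (k⁻¹ • c) * Matrix.replicateRow Unit (1 : Fin n → ℝ)) := by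
    rw [smul_add, hM_def]
    congr 1
    ext i j
    simp only [Matrix.smul_apply, Matrix.mul_apply, Matrix.replicateCol_apply, Matrix.replicateRow_apply,
      Pi.smul_apply, smul_eq_mul, Pi.one_apply, mul_one, Finset.univ_unique,
      Finset.sum_singleton]
    rw [← mul_assoc, mul_inv_cancel₀ hk.ne', one_mul]
  have hdetM : M.det = k ^ (n - 1) := by
    rw [hM2, Matrix.det_smul, Matrix.det_one_add_replicateCol_mul_replicateRow]
    have h1 : dotProduct (1 : Fin n → ℝ) (k⁻¹ • c) = k⁻¹ * ∑ i, c i := by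
      simp [dotProduct, Finset.mul_sum]
    rw [h1, Fintype.card_fin]
    have h2 : (1 : ℝ) + k⁻¹ * ∑ i, c i = k⁻¹ := by
      have : k ≠ 0 := hk.ne'
      field_simp
      rw [hk_def]; ring
    rw [h2]
    obtain ⟨m, rfl⟩ := Nat.exists_eq_add_of_le hn
    have h3 : 1 + m - 1 = m := by omega
    rw [h3, pow_add, pow_one, mul_comm k (k ^ m), mul_assoc,
      mul_inv_cancel₀ hk.ne', mul_one]
  set f : (Fin n → ℝ) →ₗ[ℝ] (Fin n → ℝ) := Matrix.toLin' M with hf_def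
  have hdetf : LinearMap.det f = k ^ (n - 1) := by
    rw [hf_def, LinearMap.det_toLin', hdetM]
  have hfapp : ∀ u i, f u i = k * u i + c i * ∑ j, u j := by
    intro u i
    rw [hf_def]
    simp only [Matrix.toLin'_apply, Matrix.mulVec, dotProduct, hM_def,
      Matrix.add_apply, Matrix.smul_apply, Matrix.one_apply, Matrix.mul_apply,
      Matrix.replicateCol_apply, Matrix.replicateRow_apply]
    have hterm : ∀ y ∈ Finset.univ,
        ((k • if i = y then (1:ℝ) else 0) + ∑ _x : Unit, c i * (1 : Fin n → ℝ) y) * u y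
          = (if i = y then k * u y else 0) + c i * u y := by
      intro y _
      simp only [Pi.one_apply, mul_one, smul_eq_mul, Finset.univ_unique,
        Finset.sum_const, Finset.card_singleton, one_smul]
      split_ifs <;> ring
    rw [Finset.sum_congr rfl hterm, Finset.sum_add_distrib, Finset.sum_ite_eq,
      if_pos (Finset.mem_univ i), ← Finset.mul_sum]
  have hfsum : ∀ u, ∑ i, f u i = ∑ i, u i := by
    intro u
    simp only [hfapp]
    rw [Finset.sum_add_distrib, ← Finset.mul_sum, ← Finset.sum_mul, hk_def]
    ring
  have hfmeas : Measurable f := (LinearMap.continuous_on_pi f).measurable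
  set S : Set (Fin n → ℝ) := {e | ∀ i, c i * ∑ j, e j < e i} with hS_def
  have hSmeas : MeasurableSet S := by
    have hSeq : S = ⋂ i, {e : Fin n → ℝ | c i * ∑ j, e j < e i} := by
      ext e; simp [hS_def, Set.mem_iInter]
    rw [hSeq]
    refine MeasurableSet.iInter fun i => measurableSet_lt ?_ (measurable_pi_apply i)
    exact measurable_const.mul (Finset.measurable_sum _ fun j _ => measurable_pi_apply j)
  set D : (Fin n → ℝ) → ℝ≥0∞ := fun e => ∏ i, epdf (e i) with hD_def
  have hDmeas : Measurable D :=
    Finset.measurable_prod _ fun i _ => epdf_meas.comp (measurable_pi_apply i)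
  set O : Set (Fin n → ℝ) := {e | ∀ i, 0 < e i} with hO_def
  have hOeq : O = Set.univ.pi fun _ : Fin n => Set.Ioi (0 : ℝ) := by
    ext e; simp [hO_def, Set.mem_univ_pi]
  have hOmeas : MeasurableSet O := by
    rw [hOeq]; exact MeasurableSet.univ_pi fun _ => measurableSet_Ioi
  have hcomp : (fun u => S.indicator D (f u)) = O.indicator D := by
    funext u
    by_cases hu : u ∈ O
    · have hupos : ∀ i, 0 < u i := hu
      have husum : 0 ≤ ∑ j, u j := Finset.sum_nonneg fun j _ => (hupos j).le
      have hfS : f u ∈ S := by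
        intro i
        rw [hfapp, hfsum]
        have : 0 < k * u i := mul_pos hk (hupos i)
        linarith
      rw [Set.indicator_of_mem hfS, Set.indicator_of_mem hu]
      have hfpos : ∀ i, 0 ≤ f u i := by
        intro i
        rw [hfapp]
        have h1 : 0 ≤ c i * ∑ j, u j := mul_nonneg (hc i) husum
        have h2 : 0 < k * u i := mul_pos hk (hupos i)
        linarith
      rw [hD_def]
      simp only
      rw [prod_epdf_eq hfpos, prod_epdf_eq fun i => (hupos i).le, hfsum]
    · have hfS : f u ∉ S := by
        intro hfS
        apply hu
        intro i
        have hi := hfS i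
        rw [hfapp, hfsum] at hi
        have hki : 0 < k * u i := by linarith
        nlinarith
      rw [Set.indicator_of_notMem hfS, Set.indicator_of_notMem hu]
  have hPO : (Measure.pi fun _ : Fin n => expMeasure 1) O = 1 := by
    rw [hOeq, Measure.pi_pi]
    simp [expMeasure_Ioi]
  have hind_meas : Measurable (S.indicator D) := hDmeas.indicator hSmeas
  have hdet_ne : LinearMap.det f ≠ 0 := by
    rw [hdetf]; positivity
  have hmap := Real.map_linearMap_volume_pi_eq_smul_volume_pi hdet_ne
  have hstep : (1 : ℝ≥0∞) = ENNReal.ofReal ((k ^ (n - 1))⁻¹) *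
      ∫⁻ y, S.indicator D y ∂(volume : Measure (Fin n → ℝ)) := by
    have e1 : (1 : ℝ≥0∞) = ∫⁻ u, O.indicator D u ∂(volume : Measure (Fin n → ℝ)) := by
      rw [lintegral_indicator hOmeas, ← withDensity_apply _ hOmeas, ← pi_exp_eq, hPO]
    have e2 : ∫⁻ u, O.indicator D u ∂(volume : Measure (Fin n → ℝ))
        = ∫⁻ u, S.indicator D (f u) ∂(volume : Measure (Fin n → ℝ)) := by
      rw [hcomp]
    have e3 : ∫⁻ u, S.indicator D (f u) ∂(volume : Measure (Fin n → ℝ))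
        = ∫⁻ y, S.indicator D y ∂(Measure.map f volume) :=
      (lintegral_map hind_meas hfmeas).symm
    rw [e1, e2, e3, hmap, lintegral_smul_measure, hdetf,
      abs_of_pos (by positivity : (0:ℝ) < (k ^ (n - 1))⁻¹), smul_eq_mul]
  have hPS : (Measure.pi fun _ : Fin n => expMeasure 1) S
      = ∫⁻ y, S.indicator D y ∂(volume : Measure (Fin n → ℝ)) := by
    rw [lintegral_indicator hSmeas, ← withDensity_apply _ hSmeas, ← pi_exp_eq]
  have hkpow : (0:ℝ) < k ^ (n - 1) := by positivity
  calc (Measure.pi fun _ : Fin n => expMeasure 1) S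
      = ENNReal.ofReal (k ^ (n - 1)) *
        (ENNReal.ofReal ((k ^ (n - 1))⁻¹) *
          ∫⁻ y, S.indicator D y ∂(volume : Measure (Fin n → ℝ))) := by
        rw [← mul_assoc, ← ENNReal.ofReal_mul hkpow.le, mul_inv_cancel₀ hkpow.ne',
          ENNReal.ofReal_one, one_mul, hPS]
    _ = ENNReal.ofReal (k ^ (n - 1)) := by rw [← hstep, mul_one]

end Core

section Slice

open Set Finset

variable {n : ℕ}

lemma pi_exp_compl_orthant (n : ℕ) :
    (Measure.pi fun _ : Fin n => expMeasure 1) {e : Fin n → ℝ | ∀ i, 0 < e i}ᶜ = 0 := by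
  haveI : IsProbabilityMeasure (expMeasure 1) := isProbabilityMeasure_expMeasure one_pos
  have hOeq : {e : Fin n → ℝ | ∀ i, 0 < e i}
      = Set.univ.pi fun _ : Fin n => Set.Ioi (0 : ℝ) := by
    ext e; simp [Set.mem_univ_pi]
  have hOmeas : MeasurableSet {e : Fin n → ℝ | ∀ i, 0 < e i} := by
    rw [hOeq]; exact MeasurableSet.univ_pi fun _ => measurableSet_Ioi
  have hPO : (Measure.pi fun _ : Fin n => expMeasure 1) {e : Fin n → ℝ | ∀ i, 0 < e i} = 1 := by
    rw [hOeq, Measure.pi_pi]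
    simp [expMeasure_Ioi]
  haveI : IsProbabilityMeasure (Measure.pi fun _ : Fin n => expMeasure 1) := by infer_instance
  rw [measure_compl hOmeas (measure_ne_top _ _), hPO, measure_univ, tsub_self]

lemma meas_eq_of_inter_orthant {S₁ S₂ : Set (Fin n → ℝ)}
    (h : S₁ ∩ {e : Fin n → ℝ | ∀ i, 0 < e i} = S₂ ∩ {e : Fin n → ℝ | ∀ i, 0 < e i}) :
    (Measure.pi fun _ : Fin n => expMeasure 1) S₁
      = (Measure.pi fun _ : Fin n => expMeasure 1) S₂ := by
  rw [← measure_inter_conull (pi_exp_compl_orthant n), h,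
    measure_inter_conull (pi_exp_compl_orthant n)]

/-- Joint slice computation. -/
lemma slice_joint (hn : 2 ≤ n) (x : Fin n → ℝ) (hx : ∀ i, 0 ≤ x i) (r : ℝ) :
    (Measure.pi fun _ : Fin n => expMeasure 1)
        {e : Fin n → ℝ | ∀ i, x i < r * (e i / ∑ j, e j)}
      = Set.indicator (Set.Ioi (∑ i, x i))
          (fun r => ENNReal.ofReal ((1 - (∑ i, x i) / r) ^ (n - 1))) r := by
  haveI : NeZero n := ⟨by omega⟩
  have hs0 : 0 ≤ ∑ i, x i := Finset.sum_nonneg fun i _ => hx i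
  by_cases hr : (∑ i, x i) < r
  · have hr0 : 0 < r := lt_of_le_of_lt hs0 hr
    rw [Set.indicator_of_mem (Set.mem_Ioi.mpr hr)]
    have hco := core_lemma (n := n) (by omega) (fun i => x i / r)
      (fun i => div_nonneg (hx i) hr0.le)
      (by rw [← Finset.sum_div]; exact (div_lt_one hr0).mpr hr)
    rw [← Finset.sum_div] at hco
    rw [← hco]
    apply meas_eq_of_inter_orthant
    ext e
    simp only [Set.mem_inter_iff, Set.mem_setOf_eq]
    constructor
    · rintro ⟨h1, h2⟩
      refine ⟨fun i => ?_, h2⟩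
      have hsum : 0 < ∑ j, e j := Finset.sum_pos (fun j _ => h2 j) Finset.univ_nonempty
      have := h1 i
      rw [mul_div_assoc'] at this
      rw [div_mul_eq_mul_div, div_lt_iff₀ hr0, mul_comm (e i) r]
      exact (lt_div_iff₀ hsum).mp this
    · rintro ⟨h1, h2⟩
      refine ⟨fun i => ?_, h2⟩
      have hsum : 0 < ∑ j, e j := Finset.sum_pos (fun j _ => h2 j) Finset.univ_nonempty
      have := h1 i
      rw [div_mul_eq_mul_div, div_lt_iff₀ hr0, mul_comm (e i) r] at this
      rw [mul_div_assoc']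
      exact (lt_div_iff₀ hsum).mpr this
  · rw [Set.indicator_of_notMem (by simpa using hr)]
    have hempty : {e : Fin n → ℝ | ∀ i, x i < r * (e i / ∑ j, e j)}
        ∩ {e : Fin n → ℝ | ∀ i, 0 < e i}
        = (∅ : Set (Fin n → ℝ)) ∩ {e : Fin n → ℝ | ∀ i, 0 < e i} := by
      rw [Set.empty_inter]
      ext e
      simp only [Set.mem_inter_iff, Set.mem_setOf_eq, Set.mem_empty_iff_false, iff_false,
        not_and]
      intro h1 h2
      have hsum : 0 < ∑ j, e j := Finset.sum_pos (fun j _ => h2 j) Finset.univ_nonempty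
      have hlt : ∑ i, x i < ∑ i, r * (e i / ∑ j, e j) :=
        Finset.sum_lt_sum_of_nonempty Finset.univ_nonempty fun i _ => h1 i
      rw [← Finset.mul_sum, ← Finset.sum_div, div_self hsum.ne', mul_one] at hlt
      push_neg at hr
      linarith
    have := meas_eq_of_inter_orthant hempty
    rw [this]
    simp

/-- Marginal slice computation. -/
lemma slice_marginal (hn : 2 ≤ n) (x : Fin n → ℝ) (hx : ∀ i, 0 ≤ x i) (r : ℝ) (i : Fin n) :
    (Measure.pi fun _ : Fin n => expMeasure 1)
        {e : Fin n → ℝ | (∑ j, x j) < r * (e i / ∑ j, e j)}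
      = Set.indicator (Set.Ioi (∑ i, x i))
          (fun r => ENNReal.ofReal ((1 - (∑ i, x i) / r) ^ (n - 1))) r := by
  haveI : NeZero n := ⟨by omega⟩
  haveI : Nontrivial (Fin n) := Fin.nontrivial_iff_two_le.mpr hn
  have hs0 : 0 ≤ ∑ i, x i := Finset.sum_nonneg fun i _ => hx i
  set s : ℝ := ∑ j, x j with hs_def
  by_cases hr : s < r
  · have hr0 : 0 < r := lt_of_le_of_lt hs0 hr
    rw [Set.indicator_of_mem (Set.mem_Ioi.mpr hr)]
    classical
    have hcsum : ∑ j, (if j = i then s / r else 0) = s / r := by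
      simp [Finset.sum_ite_eq']
    have hc0 : ∀ j : Fin n, 0 ≤ (if j = i then s / r else 0) := by
      intro j
      split
      · exact div_nonneg hs0 hr0.le
      · exact le_rfl
    have hco := core_lemma (n := n) (by omega) (fun j => if j = i then s / r else 0)
      hc0 (by rw [hcsum]; exact (div_lt_one hr0).mpr hr)
    rw [hcsum] at hco
    rw [← hco]
    apply meas_eq_of_inter_orthant
    ext e
    simp only [Set.mem_inter_iff, Set.mem_setOf_eq]
    constructor
    · rintro ⟨h1, h2⟩
      refine ⟨fun j => ?_, h2⟩
      have hsum : 0 < ∑ j, e j := Finset.sum_pos (fun j _ => h2 j) Finset.univ_nonempty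
      by_cases hji : j = i
      · subst hji
        have hit : (if j = j then s / r else 0) = s / r := if_pos rfl
        rw [hit]
        rw [mul_div_assoc'] at h1
        rw [div_mul_eq_mul_div, div_lt_iff₀ hr0, mul_comm (e j) r]
        exact (lt_div_iff₀ hsum).mp h1
      · simp only [if_neg hji, zero_mul]
        exact h2 j
    · rintro ⟨h1, h2⟩
      refine ⟨?_, h2⟩
      have hsum : 0 < ∑ j, e j := Finset.sum_pos (fun j _ => h2 j) Finset.univ_nonempty
      have := h1 i
      have hit : (if i = i then s / r else 0) = s / r := if_pos rfl
      rw [hit] at this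
      rw [div_mul_eq_mul_div, div_lt_iff₀ hr0, mul_comm (e i) r] at this
      rw [mul_div_assoc']
      exact (lt_div_iff₀ hsum).mpr this
  · rw [Set.indicator_of_notMem (by simpa using hr)]
    have hempty : {e : Fin n → ℝ | s < r * (e i / ∑ j, e j)}
        ∩ {e : Fin n → ℝ | ∀ i, 0 < e i}
        = (∅ : Set (Fin n → ℝ)) ∩ {e : Fin n → ℝ | ∀ i, 0 < e i} := by
      rw [Set.empty_inter]
      ext e
      simp only [Set.mem_inter_iff, Set.mem_setOf_eq, Set.mem_empty_iff_false, iff_false,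
        not_and]
      intro h1 h2
      have hsum : 0 < ∑ j, e j := Finset.sum_pos (fun j _ => h2 j) Finset.univ_nonempty
      push_neg at hr
      obtain ⟨j, hj⟩ := exists_ne i
      have hei : e i < ∑ j, e j :=
        Finset.single_lt_sum hj (Finset.mem_univ i) (Finset.mem_univ j)
          (h2 j) (fun k _ _ => (h2 k).le)
      have hdiv : e i / ∑ j, e j < 1 := (div_lt_one hsum).mpr hei
      have hdiv0 : 0 < e i / ∑ j, e j := div_pos (h2 i) hsum
      rcases le_or_gt r 0 with hr0 | hr0
      · have : r * (e i / ∑ j, e j) ≤ 0 := mul_nonpos_of_nonpos_of_nonneg hr0 hdiv0.le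
        linarith
      · have : r * (e i / ∑ j, e j) < r := by
          nlinarith
        linarith
    have := meas_eq_of_inter_orthant hempty
    rw [this]
    simp

end Slice

/-- Joint survival function of a multivariate ℓ1-norm symmetric distribution:
`P[X_1 > x_1, ..., X_n > x_n] = ∫_{‖x‖}^∞ (1 - ‖x‖/r)^(n-1) ν(dr) = F̄(‖x‖)` for
`x ∈ ℝ₊ⁿ`, where `‖x‖ = ∑ i, x i` and `F̄` is the one-dimensional marginal survival
function. -/
theorem asp_l1_symmetric_joint_survival
    {Ω : Type*} [MeasurableSpace Ω] (μ : Measure Ω) [IsProbabilityMeasure μ]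
    (n : ℕ) (hn : 2 ≤ n) (ν : Measure ℝ) [IsProbabilityMeasure ν]
    (R : Ω → ℝ) (U : Ω → Fin n → ℝ)
    (hR : Measure.map R μ = ν) (hRnn : ∀ᵐ ω ∂μ, 0 ≤ R ω)
    (hU : Measure.map U μ =
      Measure.map (fun e (i : Fin n) => e i / ∑ j, e j)
        (Measure.pi fun _ : Fin n => expMeasure 1))
    (hindep : IndepFun R U μ) :
    ∀ x : Fin n → ℝ, (∀ i, 0 ≤ x i) →
      (μ {ω | ∀ i, x i < R ω * U ω i}
          = ∫⁻ r in Set.Ioi (∑ i, x i),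
              ENNReal.ofReal ((1 - (∑ i, x i) / r) ^ (n - 1)) ∂ν) ∧
      (∀ i : Fin n, μ {ω | (∑ j, x j) < R ω * U ω i}
          = ∫⁻ r in Set.Ioi (∑ i, x i),
              ENNReal.ofReal ((1 - (∑ i, x i) / r) ^ (n - 1)) ∂ν) := by
  intro x hx
  haveI : IsProbabilityMeasure (expMeasure 1) := isProbabilityMeasure_expMeasure one_pos
  set P : Measure (Fin n → ℝ) := Measure.pi fun _ : Fin n => expMeasure 1 with hP_def
  haveI : IsProbabilityMeasure P := by rw [hP_def]; infer_instance
  set q : (Fin n → ℝ) → (Fin n → ℝ) := fun e i => e i / ∑ j, e j with hq_def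
  have hqmeas : Measurable q :=
    measurable_pi_lambda _ fun i => (measurable_pi_apply i).div
      (Finset.measurable_sum _ fun j _ => measurable_pi_apply j)
  -- AEMeasurability
  have hRm : AEMeasurable R μ := by
    by_contra h
    rw [Measure.map_of_not_aemeasurable h] at hR
    exact (IsProbabilityMeasure.ne_zero ν) hR.symm
  have hUm : AEMeasurable U μ := by
    by_contra h
    rw [Measure.map_of_not_aemeasurable h] at hU
    have : (Measure.map q P) Set.univ = 1 := by
      rw [Measure.map_apply hqmeas MeasurableSet.univ]
      simp
    rw [← hU] at this
    simp at this
  have hprod : Measure.map (fun ω => (R ω, U ω)) μ = ν.prod (Measure.map U μ) := by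
    have := (indepFun_iff_map_prod_eq_prod_map_map hRm hUm).mp hindep
    rw [this, hR]
  -- measurability of slices
  have hslice_meas : ∀ y : Fin n → ℝ, MeasurableSet {u : Fin n → ℝ | ∀ i, y i < u i} := by
    intro y
    have : {u : Fin n → ℝ | ∀ i, y i < u i} = ⋂ i, {u : Fin n → ℝ | y i < u i} := by
      ext u; simp [Set.mem_iInter]
    rw [this]
    exact MeasurableSet.iInter fun i => measurableSet_lt measurable_const
      (measurable_pi_apply i)
  constructor
  · -- joint survival
    set T : Set (ℝ × (Fin n → ℝ)) := {p | ∀ i, x i < p.1 * p.2 i} with hT_def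
    have hTmeas : MeasurableSet T := by
      have : T = ⋂ i, {p : ℝ × (Fin n → ℝ) | x i < p.1 * p.2 i} := by
        ext p; simp [hT_def, Set.mem_iInter]
      rw [this]
      exact MeasurableSet.iInter fun i => measurableSet_lt measurable_const
        (measurable_fst.mul ((measurable_pi_apply i).comp measurable_snd))
    have h1 : μ {ω | ∀ i, x i < R ω * U ω i}
        = (Measure.map (fun ω => (R ω, U ω)) μ) T := by
      rw [Measure.map_apply_of_aemeasurable (hRm.prodMk hUm) hTmeas]
      rfl
    rw [h1, hprod, Measure.prod_apply hTmeas]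
    have h2 : ∀ r : ℝ, (Measure.map U μ) (Prod.mk r ⁻¹' T)
        = Set.indicator (Set.Ioi (∑ i, x i))
            (fun r => ENNReal.ofReal ((1 - (∑ i, x i) / r) ^ (n - 1))) r := by
      intro r
      have hpre : Prod.mk r ⁻¹' T = {u : Fin n → ℝ | ∀ i, x i < r * u i} := rfl
      have hmeas2 : MeasurableSet {u : Fin n → ℝ | ∀ i, x i < r * u i} := by
        have : {u : Fin n → ℝ | ∀ i, x i < r * u i}
            = ⋂ i, {u : Fin n → ℝ | x i < r * u i} := by
          ext u; simp [Set.mem_iInter]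
        rw [this]
        exact MeasurableSet.iInter fun i => measurableSet_lt measurable_const
          (measurable_const.mul (measurable_pi_apply i))
      rw [hpre, hU, Measure.map_apply hqmeas hmeas2]
      have : q ⁻¹' {u : Fin n → ℝ | ∀ i, x i < r * u i}
          = {e : Fin n → ℝ | ∀ i, x i < r * (e i / ∑ j, e j)} := rfl
      rw [this]
      exact slice_joint hn x hx r
    rw [lintegral_congr h2, lintegral_indicator measurableSet_Ioi]
  · -- marginal survival
    intro i
    set T : Set (ℝ × (Fin n → ℝ)) := {p | (∑ j, x j) < p.1 * p.2 i} with hT_def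
    have hTmeas : MeasurableSet T :=
      measurableSet_lt measurable_const
        (measurable_fst.mul ((measurable_pi_apply i).comp measurable_snd))
    have h1 : μ {ω | (∑ j, x j) < R ω * U ω i}
        = (Measure.map (fun ω => (R ω, U ω)) μ) T := by
      rw [Measure.map_apply_of_aemeasurable (hRm.prodMk hUm) hTmeas]
      rfl
    rw [h1, hprod, Measure.prod_apply hTmeas]
    have h2 : ∀ r : ℝ, (Measure.map U μ) (Prod.mk r ⁻¹' T)
        = Set.indicator (Set.Ioi (∑ i, x i))
            (fun r => ENNReal.ofReal ((1 - (∑ i, x i) / r) ^ (n - 1))) r := by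
      intro r
      have hpre : Prod.mk r ⁻¹' T = {u : Fin n → ℝ | (∑ j, x j) < r * u i} := rfl
      have hmeas2 : MeasurableSet {u : Fin n → ℝ | (∑ j, x j) < r * u i} :=
        measurableSet_lt measurable_const (measurable_const.mul (measurable_pi_apply i))
      rw [hpre, hU, Measure.map_apply hqmeas hmeas2]
      have : q ⁻¹' {u : Fin n → ℝ | (∑ j, x j) < r * u i}
          = {e : Fin n → ℝ | (∑ j, x j) < r * (e i / ∑ j, e j)} := rfl
      rw [this]
      exact slice_marginal hn x hx r i
    rw [lintegral_congr h2, lintegral_indicator measurableSet_Ioi]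
end

section
/- Let γ be a gamma process with density f_t(x) = x^{mt-1}e^{-x}/Γ(mt) at time t. The gamma bridge γ_{·,T} (γ conditioned on γ_T = 1) has transition law P[γ_{tT} ∈ dy | γ_{sT} = x] = 1_{x<y<1} ((y-x)/(1-x))^{m(t-s)-1} ((1-y)/(1-x))^{m(T-t)-1} / ((1-x) B(m(t-s), m(T-t))) dy for 0 ≤ s < t ≤ T; equivalently, (γ_{tT} - γ_{sT})/(1 - γ_{sT}) given γ_{sT} = x has a Beta(m(t-s), m(T-t)) distribution. -/
open MeasureTheory

noncomputable section

/-- The Gamma(t, 1) density. -/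
def gammaDens (t x : ℝ) : ℝ :=
  if 0 < x then x ^ (t - 1) * Real.exp (-x) / Real.Gamma t else 0

/-- The Beta function `B(a,b) = Γ(a)Γ(b)/Γ(a+b)`. -/
def betaB (a b : ℝ) : ℝ := Real.Gamma a * Real.Gamma b / Real.Gamma (a + b)

lemma betaB_pos {a b : ℝ} (ha : 0 < a) (hb : 0 < b) : 0 < betaB a b :=
  div_pos (mul_pos (Real.Gamma_pos_of_pos ha) (Real.Gamma_pos_of_pos hb))
    (Real.Gamma_pos_of_pos (by linarith))

/-- Key density identity for the gamma bridge. -/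
lemma gammaDens_ratio (a b u v : ℝ) (ha : 0 < a) (hb : 0 < b) (hu : 0 < u) (hv : 0 < v) :
    gammaDens a u * gammaDens b v / gammaDens (a + b) (u + v)
      = (u / (u + v)) ^ (a - 1) * (v / (u + v)) ^ (b - 1) / ((u + v) * betaB a b) := by
  have hc : 0 < u + v := by linarith
  have hΓa := Real.Gamma_pos_of_pos ha
  have hΓb := Real.Gamma_pos_of_pos hb
  have hΓab := Real.Gamma_pos_of_pos (show 0 < a + b by linarith)
  simp only [gammaDens, betaB, if_pos hu, if_pos hv, if_pos hc]
  rw [Real.div_rpow hu.le hc.le, Real.div_rpow hv.le hc.le]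
  have hcp : (u + v) ^ (a + b - 1) = (u + v) ^ (a - 1) * (u + v) ^ (b - 1) * (u + v) := by
    rw [show a + b - 1 = (a - 1) + ((b - 1) + 1) by ring, Real.rpow_add hc,
      Real.rpow_add hc, Real.rpow_one, mul_assoc]
  have hexp : Real.exp (-(u + v)) = Real.exp (-u) * Real.exp (-v) := by
    rw [← Real.exp_add]; ring_nf
  rw [hcp, hexp]
  have h1 : (u + v) ^ (a - 1) ≠ 0 := (Real.rpow_pos_of_pos hc _).ne'
  have h2 : (u + v) ^ (b - 1) ≠ 0 := (Real.rpow_pos_of_pos hc _).ne'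
  have h3 : Real.exp (-u) ≠ 0 := (Real.exp_pos _).ne'
  have h4 : Real.exp (-v) ≠ 0 := (Real.exp_pos _).ne'
  field_simp

/-- Pushing forward `withDensity` through a measurable equivalence. -/
lemma map_withDensity_equiv {α β : Type*} [MeasurableSpace α] [MeasurableSpace β]
    (e : α ≃ᵐ β) (μ : Measure α) (g : β → ENNReal) (hg : Measurable g) :
    (μ.withDensity (fun a => g (e a))).map e = (μ.map e).withDensity g := by
  ext s hs
  rw [Measure.map_apply e.measurable hs, withDensity_apply _ hs,
    withDensity_apply _ (e.measurable hs), Measure.restrict_map e.measurable hs,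
    lintegral_map hg e.measurable]

/-- Transition law of the gamma bridge: the conditional density
`f_{t-s}(y-x) f_{T-t}(1-y)/f_{T-s}(1-x)` equals
`((y-x)/(1-x))^{m(t-s)-1}((1-y)/(1-x))^{m(T-t)-1}/((1-x)B(m(t-s),m(T-t)))` for
`x < y < 1`; equivalently, `(γ_{tT}-x)/(1-x)` given `γ_{sT} = x` has a
Beta(m(t-s), m(T-t)) distribution. -/
theorem asp_gamma_bridge_transition (m s t T x : ℝ) (hm : 0 < m)
    (hs : 0 ≤ s) (hst : s < t) (htT : t < T) (hx0 : 0 ≤ x) (hx1 : x < 1) :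
    (∀ y : ℝ, x < y → y < 1 →
      gammaDens (m * (t - s)) (y - x) * gammaDens (m * (T - t)) (1 - y)
          / gammaDens (m * (T - s)) (1 - x)
        = ((y - x) / (1 - x)) ^ (m * (t - s) - 1)
            * ((1 - y) / (1 - x)) ^ (m * (T - t) - 1)
            / ((1 - x) * betaB (m * (t - s)) (m * (T - t)))) ∧
    (Measure.map (fun y => (y - x) / (1 - x))
        (volume.withDensity fun y =>
          ENNReal.ofReal (if x < y ∧ y < 1 then
            gammaDens (m * (t - s)) (y - x) * gammaDens (m * (T - t)) (1 - y)
              / gammaDens (m * (T - s)) (1 - x) else 0))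
      = volume.withDensity fun z =>
          ENNReal.ofReal (if 0 < z ∧ z < 1 then
            z ^ (m * (t - s) - 1) * (1 - z) ^ (m * (T - t) - 1)
              / betaB (m * (t - s)) (m * (T - t)) else 0)) := by
  set a := m * (t - s) with ha_def
  set b := m * (T - t) with hb_def
  have ha : 0 < a := mul_pos hm (by linarith)
  have hb : 0 < b := mul_pos hm (by linarith)
  have hc : 0 < 1 - x := by linarith
  have hab : m * (T - s) = a + b := by rw [ha_def, hb_def]; ring
  have hB := betaB_pos ha hb
  -- Part 1
  have part1 : ∀ y : ℝ, x < y → y < 1 →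
      gammaDens a (y - x) * gammaDens b (1 - y) / gammaDens (m * (T - s)) (1 - x)
        = ((y - x) / (1 - x)) ^ (a - 1) * ((1 - y) / (1 - x)) ^ (b - 1)
            / ((1 - x) * betaB a b) := by
    intro y hxy hy1
    have hu : 0 < y - x := by linarith
    have hv : 0 < 1 - y := by linarith
    have hsum : (y - x) + (1 - y) = 1 - x := by ring
    rw [hab, ← hsum]
    exact gammaDens_ratio a b (y - x) (1 - y) ha hb hu hv
  refine ⟨part1, ?_⟩
  -- Part 2
  set g : ℝ → ENNReal := fun z =>
    ENNReal.ofReal (if 0 < z ∧ z < 1 then z ^ (a - 1) * (1 - z) ^ (b - 1) / betaB a b else 0)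
    with hg_def
  have hg : Measurable g := by
    rw [hg_def]
    apply Measurable.ennreal_ofReal
    apply Measurable.ite
    · exact measurableSet_Ioi.inter measurableSet_Iio
    · exact ((measurable_id.pow_const _).mul
        ((measurable_const.sub measurable_id).pow_const _)).div_const _
    · exact measurable_const
  -- the map as a measurable equivalence
  set e : ℝ ≃ᵐ ℝ :=
    (Homeomorph.addRight (-x)).toMeasurableEquiv.trans
      ((Homeomorph.mulLeft₀ ((1 - x)⁻¹) (inv_ne_zero hc.ne')).toMeasurableEquiv) with he_def
  have he : ∀ y : ℝ, e y = (y - x) / (1 - x) := by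
    intro y
    show (1 - x)⁻¹ * (y + -x) = (y - x) / (1 - x)
    rw [← sub_eq_add_neg, div_eq_inv_mul]
  have hfun : (fun y : ℝ => (y - x) / (1 - x)) = ⇑e := by
    funext y; rw [he y]
  -- pointwise identity of densities
  have hpt : (fun y : ℝ =>
      ENNReal.ofReal (if x < y ∧ y < 1 then
        gammaDens a (y - x) * gammaDens b (1 - y) / gammaDens (m * (T - s)) (1 - x) else 0))
      = fun y => (ENNReal.ofReal (1 - x))⁻¹ * g (e y) := by
    funext y
    rw [he y]
    show _ = (ENNReal.ofReal (1 - x))⁻¹ * ENNReal.ofReal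
      (if 0 < (y - x) / (1 - x) ∧ (y - x) / (1 - x) < 1 then
        ((y - x) / (1 - x)) ^ (a - 1) * (1 - (y - x) / (1 - x)) ^ (b - 1) / betaB a b else 0)
    by_cases h : x < y ∧ y < 1
    · obtain ⟨hxy, hy1⟩ := h
      have hu : 0 < y - x := by linarith
      have hz0 : 0 < (y - x) / (1 - x) := div_pos hu hc
      have hz1 : (y - x) / (1 - x) < 1 := (div_lt_one hc).mpr (by linarith)
      rw [if_pos ⟨hxy, hy1⟩, if_pos ⟨hz0, hz1⟩, part1 y hxy hy1]
      have h1z : 1 - (y - x) / (1 - x) = (1 - y) / (1 - x) := by field_simp; ring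
      rw [h1z]
      have hq : (0:ℝ) ≤ ((y - x) / (1 - x)) ^ (a - 1) * ((1 - y) / (1 - x)) ^ (b - 1) :=
        mul_nonneg (Real.rpow_nonneg hz0.le _)
          (Real.rpow_nonneg (div_nonneg (by linarith) hc.le) _)
      rw [show ((y - x) / (1 - x)) ^ (a - 1) * ((1 - y) / (1 - x)) ^ (b - 1)
            / ((1 - x) * betaB a b)
          = (((y - x) / (1 - x)) ^ (a - 1) * ((1 - y) / (1 - x)) ^ (b - 1) / betaB a b)
            / (1 - x) by rw [div_div, mul_comm (betaB a b)]]
      rw [ENNReal.ofReal_div_of_pos hc, ENNReal.div_eq_inv_mul]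
    · rw [if_neg h]
      have : ¬(0 < (y - x) / (1 - x) ∧ (y - x) / (1 - x) < 1) := by
        intro ⟨hz0, hz1⟩
        apply h
        have hu : 0 < y - x := by
          rcases div_pos_iff.mp hz0 with ⟨h1, _⟩ | ⟨_, h2⟩
          · exact h1
          · linarith
        have := (div_lt_one hc).mp hz1
        constructor <;> linarith
      rw [if_neg this]
      simp
  rw [hfun, hpt]
  have hr_ne_top : (ENNReal.ofReal (1 - x))⁻¹ ≠ ⊤ := by
    simp [ENNReal.inv_ne_top, ENNReal.ofReal_pos.mpr hc, (ENNReal.ofReal_pos.mpr hc).ne']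
  have step1 : (volume.withDensity fun y => (ENNReal.ofReal (1 - x))⁻¹ * g (e y))
      = (ENNReal.ofReal (1 - x))⁻¹ • volume.withDensity (fun y => g (e y)) := by
    rw [← withDensity_smul' _ _ hr_ne_top]
    rfl
  rw [step1, Measure.map_smul, map_withDensity_equiv e volume g hg]
  -- compute map e volume
  have hmapvol : Measure.map e volume = ENNReal.ofReal (1 - x) • volume := by
    have hco : ⇑e = (fun y : ℝ => (1 - x)⁻¹ * y) ∘ (fun y : ℝ => y + -x) := by
      funext y; rfl
    rw [hco, ← Measure.map_map (measurable_const_mul _) (measurable_add_const _),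
      map_add_right_eq_self volume (-x), Real.map_volume_mul_left (inv_ne_zero hc.ne'),
      inv_inv, abs_of_pos hc]
  rw [hmapvol, withDensity_smul_measure, smul_smul,
    ENNReal.inv_mul_cancel (ENNReal.ofReal_pos.mpr hc).ne' ENNReal.ofReal_ne_top, one_smul]

end
end

section
/- Let Γ_t = R γ_{tT} where R > 0 has law ν and γ_{·,T} is an independent gamma bridge with activity m. Then for 0 ≤ s < T, P[Γ_T ∈ dy | Γ_s = x] = 1_{y>x} (y-x)^{m(T-s)-1} y^{1-mT} ν(dy) / ∫_x^∞ (z-x)^{m(T-s)-1} z^{1-mT} ν(dz). -/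
open MeasureTheory ProbabilityTheory

noncomputable section

open scoped ENNReal

section auxx
open Set

namespace ASPGRBaux

/-- joint density (in `x`, against `ν(dy)`) of `(X, R)` where `X = R·β`. -/
def jden (b a C : ℝ) (x y : ℝ) : ℝ≥0∞ :=
  ENNReal.ofReal (if 0 < x ∧ x < y then
    x ^ (b - 1) * ((y - x) ^ (a - 1) * y ^ (1 - (b + a))) / C else 0)

/-- beta density. -/
def bden (b a C : ℝ) (u : ℝ) : ℝ≥0∞ :=
  ENNReal.ofReal (if 0 < u ∧ u < 1 then u ^ (b - 1) * (1 - u) ^ (a - 1) / C else 0)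

lemma meas_jden (b a C : ℝ) : Measurable (fun p : ℝ × ℝ => jden b a C p.1 p.2) := by
  apply Measurable.ennreal_ofReal
  apply Measurable.ite ?_ (by fun_prop) measurable_const
  exact (measurableSet_lt measurable_const measurable_fst).inter
    (measurableSet_lt measurable_fst measurable_snd)

lemma meas_bden (b a C : ℝ) : Measurable (bden b a C) := by
  apply Measurable.ennreal_ofReal
  apply Measurable.ite ?_ (by fun_prop) measurable_const
  exact (measurableSet_lt measurable_const measurable_id).inter
    (measurableSet_lt measurable_id measurable_const)

lemma key_pointwise (b a C : ℝ) {y : ℝ} (hy : 0 < y) (u : ℝ) :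
    ENNReal.ofReal y * jden b a C (y * u) y = bden b a C u := by
  by_cases h : 0 < u ∧ u < 1
  · have hcond : 0 < y * u ∧ y * u < y := by
      constructor
      · exact mul_pos hy h.1
      · nlinarith [h.1, h.2]
    rw [jden, bden, if_pos hcond, if_pos h, ← ENNReal.ofReal_mul hy.le]
    congr 1
    have h1 : (y * u) ^ (b - 1) = y ^ (b - 1) * u ^ (b - 1) :=
      Real.mul_rpow hy.le h.1.le
    have h2 : (y - y * u) ^ (a - 1) = y ^ (a - 1) * (1 - u) ^ (a - 1) := by
      rw [show y - y * u = y * (1 - u) by ring]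
      exact Real.mul_rpow hy.le (by linarith [h.2])
    have h4 : y * (y ^ (b - 1) * (y ^ (a - 1) * y ^ (1 - (b + a)))) = 1 := by
      rw [← Real.rpow_add hy, ← Real.rpow_add hy,
        show b - 1 + (a - 1 + (1 - (b + a))) = -1 by ring, Real.rpow_neg_one]
      exact mul_inv_cancel₀ hy.ne'
    calc y * ((y * u) ^ (b - 1) * ((y - y * u) ^ (a - 1) * y ^ (1 - (b + a))) / C)
        = (y * (y ^ (b - 1) * (y ^ (a - 1) * y ^ (1 - (b + a)))))
            * (u ^ (b - 1) * (1 - u) ^ (a - 1)) / C := by rw [h1, h2]; ring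
      _ = u ^ (b - 1) * (1 - u) ^ (a - 1) / C := by rw [h4, one_mul]
  · have hcond : ¬(0 < y * u ∧ y * u < y) := by
      intro hc
      refine h ⟨?_, ?_⟩
      · by_contra hu; push_neg at hu; nlinarith [hc.1]
      · by_contra hu; push_neg at hu; nlinarith [hc.2]
    rw [jden, bden, if_neg hcond, if_neg h]
    simp

end ASPGRBaux

namespace ASPGRBaux2
open ASPGRBaux

lemma subst (b a C : ℝ) {y : ℝ} (hy : 0 < y) (φ : ℝ → ℝ≥0∞) (hφ : Measurable φ) :
    ∫⁻ x, φ x * jden b a C x y = ∫⁻ u, φ (y * u) * bden b a C u := by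
  have hmeas : Measurable fun x => φ x * jden b a C x y :=
    hφ.mul ((meas_jden b a C).comp (measurable_id.prodMk measurable_const))
  conv_lhs => rw [← Real.smul_map_volume_mul_left hy.ne']
  rw [lintegral_smul_measure, smul_eq_mul, lintegral_map hmeas (measurable_const_mul y),
    ← lintegral_const_mul' _ _ ENNReal.ofReal_ne_top]
  refine lintegral_congr fun u => ?_
  rw [abs_of_pos hy]
  calc ENNReal.ofReal y * (φ (y * u) * jden b a C (y * u) y)
      = φ (y * u) * (ENNReal.ofReal y * jden b a C (y * u) y) := by ring
    _ = φ (y * u) * bden b a C u := by rw [key_pointwise b a C hy u]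

lemma kernel_formula (b a C : ℝ) {y : ℝ} (hy : 0 < y) {A : Set ℝ} (hA : MeasurableSet A) :
    (volume.withDensity (bden b a C)) {u | y * u ∈ A} = ∫⁻ x in A, jden b a C x y := by
  have hpre : MeasurableSet {u : ℝ | y * u ∈ A} := (measurable_const_mul y) hA
  rw [withDensity_apply _ hpre, ← lintegral_indicator hpre]
  have h1 : ∀ u, ({u : ℝ | y * u ∈ A}).indicator (bden b a C) u
      = A.indicator (fun _ => (1 : ℝ≥0∞)) (y * u) * bden b a C u := by
    intro u; by_cases h : y * u ∈ A <;> simp [Set.indicator, h]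
  rw [lintegral_congr h1,
    ← subst b a C hy (A.indicator fun _ => (1 : ℝ≥0∞)) (measurable_one.indicator hA),
    ← lintegral_indicator hA]
  refine lintegral_congr fun x => ?_
  by_cases h : x ∈ A <;> simp [Set.indicator, h]

lemma ae_pos {ν : Measure ℝ} (hν : ν (Set.Iic 0) = 0) : ∀ᵐ y ∂ν, 0 < y := by
  have h : {y : ℝ | ¬ 0 < y} = Set.Iic 0 := by ext y; simp [not_lt]
  rw [ae_iff, h]; exact hν

/-- kernel numerator/denominator integrand. -/
def Kf (b a : ℝ) (x y : ℝ) : ℝ≥0∞ :=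
  ENNReal.ofReal ((y - x) ^ (a - 1) * y ^ (1 - (b + a)))

def Nf (ν : Measure ℝ) (b a : ℝ) (B : Set ℝ) (x : ℝ) : ℝ≥0∞ :=
  ∫⁻ y in B ∩ Set.Ioi x, Kf b a x y ∂ν

def Gf (ν : Measure ℝ) (b a C : ℝ) (x : ℝ) : ℝ≥0∞ := ∫⁻ y, jden b a C x y ∂ν

lemma meas_Kf (b a : ℝ) : Measurable (fun p : ℝ × ℝ => Kf b a p.1 p.2) := by
  apply Measurable.ennreal_ofReal; fun_prop

lemma Nf_eq_indicator (ν : Measure ℝ) (b a : ℝ) {B : Set ℝ} (hB : MeasurableSet B) (x : ℝ) :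
    Nf ν b a B x = ∫⁻ y, ({p : ℝ × ℝ | p.2 ∈ B ∧ p.1 < p.2}.indicator
      (fun p => Kf b a p.1 p.2)) (x, y) ∂ν := by
  rw [Nf, ← lintegral_indicator (hB.inter measurableSet_Ioi)]
  refine lintegral_congr fun y => ?_
  by_cases h : y ∈ B ∩ Set.Ioi x
  · rw [Set.indicator_of_mem h, Set.indicator_of_mem (by simpa [Set.mem_Ioi] using h)]
  · rw [Set.indicator_of_notMem h, Set.indicator_of_notMem (by simpa [Set.mem_Ioi] using h)]

lemma meas_Nf (ν : Measure ℝ) [SFinite ν] (b a : ℝ) {B : Set ℝ} (hB : MeasurableSet B) :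
    Measurable (Nf ν b a B) := by
  have h : Nf ν b a B = fun x => ∫⁻ y, ({p : ℝ × ℝ | p.2 ∈ B ∧ p.1 < p.2}.indicator
      (fun p => Kf b a p.1 p.2)) (x, y) ∂ν := funext (Nf_eq_indicator ν b a hB)
  rw [h]
  exact Measurable.lintegral_prod_right'
    ((meas_Kf b a).indicator ((measurable_snd hB).inter
      (measurableSet_lt measurable_fst measurable_snd)))

lemma Df_eq_Nf (ν : Measure ℝ) (b a : ℝ) (x : ℝ) :
    (∫⁻ z in Set.Ioi x, Kf b a x z ∂ν) = Nf ν b a Set.univ x := by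
  rw [Nf, Set.univ_inter]

lemma jden_fact (b a C : ℝ) {x : ℝ} (hx : 0 < x) (hC : 0 < C) (y : ℝ) :
    jden b a C x y = ENNReal.ofReal (x ^ (b - 1) / C)
      * (Set.Ioi x).indicator (fun y => Kf b a x y) y := by
  by_cases h : x < y
  · rw [jden, if_pos ⟨hx, h⟩, Set.indicator_of_mem (Set.mem_Ioi.mpr h), Kf,
      ← ENNReal.ofReal_mul (by positivity)]
    congr 1; ring
  · rw [jden, if_neg (fun hc => h hc.2),
      Set.indicator_of_notMem (fun hm => h (Set.mem_Ioi.mp hm))]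
    simp

lemma Gf_eq (ν : Measure ℝ) (b a C : ℝ) {x : ℝ} (hx : 0 < x) (hC : 0 < C) :
    Gf ν b a C x = ENNReal.ofReal (x ^ (b - 1) / C) * Nf ν b a Set.univ x := by
  rw [Gf, ← Df_eq_Nf]
  simp_rw [jden_fact b a C hx hC]
  rw [lintegral_const_mul' _ _ ENNReal.ofReal_ne_top, lintegral_indicator measurableSet_Ioi]

lemma setB_eq (ν : Measure ℝ) (b a C : ℝ) {x : ℝ} (hx : 0 < x) (hC : 0 < C) (B : Set ℝ) :
    (∫⁻ y in B, jden b a C x y ∂ν)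
      = ENNReal.ofReal (x ^ (b - 1) / C) * Nf ν b a B x := by
  simp_rw [jden_fact b a C hx hC]
  rw [lintegral_const_mul' _ _ ENNReal.ofReal_ne_top, lintegral_indicator measurableSet_Ioi,
    Measure.restrict_restrict measurableSet_Ioi, Set.inter_comm, Nf]

lemma jden_zero (b a C : ℝ) {x : ℝ} (hx : ¬ 0 < x) (y : ℝ) : jden b a C x y = 0 := by
  rw [jden, if_neg (fun hc => hx hc.1)]; simp

end ASPGRBaux2

namespace ASPGRBaux3
open ASPGRBaux ASPGRBaux2

lemma rho_eq (ν : Measure ℝ) [IsProbabilityMeasure ν] (hν : ν (Set.Iic 0) = 0) (b a C : ℝ) :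
    Measure.map (fun p : ℝ × ℝ => p.1 * p.2) (ν.prod (volume.withDensity (bden b a C)))
      = volume.withDensity (Gf ν b a C) := by
  refine Measure.ext fun A' hA' => ?_
  rw [Measure.map_apply (show Measurable (fun p : ℝ × ℝ => p.1 * p.2) from
      measurable_fst.mul measurable_snd) hA',
    Measure.prod_apply ((show Measurable (fun p : ℝ × ℝ => p.1 * p.2) from
      measurable_fst.mul measurable_snd) hA')]
  have hae : ∀ᵐ y ∂ν, (volume.withDensity (bden b a C))
      (Prod.mk y ⁻¹' ((fun p : ℝ × ℝ => p.1 * p.2) ⁻¹' A'))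
      = ∫⁻ x in A', jden b a C x y := by
    filter_upwards [ae_pos hν] with y hy
    exact kernel_formula b a C hy hA'
  rw [lintegral_congr_ae hae]
  have hswap := lintegral_lintegral_swap (μ := ν) (ν := volume.restrict A')
    (f := fun y x => jden b a C x y)
    ((meas_jden b a C).comp measurable_swap).aemeasurable
  rw [hswap, withDensity_apply _ hA']
  rfl

theorem main_pos (ν : Measure ℝ) [IsProbabilityMeasure ν] (hν : ν (Set.Iic 0) = 0)
    (b a C : ℝ) (hC : 0 < C)
    (hprob : IsProbabilityMeasure (volume.withDensity (bden b a C)))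
    (A B : Set ℝ) (hA : MeasurableSet A) (hB : MeasurableSet B) :
    (ν.prod (volume.withDensity (bden b a C))) {p : ℝ × ℝ | p.1 * p.2 ∈ A ∧ p.1 ∈ B}
      = ∫⁻ x in A, (Nf ν b a B x) / (Nf ν b a Set.univ x)
          ∂(Measure.map (fun p : ℝ × ℝ => p.1 * p.2)
            (ν.prod (volume.withDensity (bden b a C)))) := by
  set π := volume.withDensity (bden b a C) with hπ
  have hGmeas : Measurable (Gf ν b a C) :=
    Measurable.lintegral_prod_right' (meas_jden b a C)
  have hFmeas : Measurable (fun x => Nf ν b a B x / Nf ν b a Set.univ x) :=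
    (meas_Nf ν b a hB).div (meas_Nf ν b a MeasurableSet.univ)
  haveI : IsProbabilityMeasure (ν.prod π) := by infer_instance
  have hρ : Measure.map (fun p : ℝ × ℝ => p.1 * p.2) (ν.prod π)
      = volume.withDensity (Gf ν b a C) := rho_eq ν hν b a C
  haveI hρp : IsProbabilityMeasure
      (Measure.map (fun p : ℝ × ℝ => p.1 * p.2) (ν.prod π)) :=
    Measure.isProbabilityMeasure_map (measurable_fst.mul measurable_snd).aemeasurable
  have hGfin : ∀ᵐ x ∂(volume : Measure ℝ), Gf ν b a C x < ⊤ := by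
    refine ae_lt_top hGmeas ?_
    have h1 : ∫⁻ x, Gf ν b a C x = volume.withDensity (Gf ν b a C) Set.univ := by
      rw [withDensity_apply _ MeasurableSet.univ, Measure.restrict_univ]
    rw [h1, ← hρ, measure_univ]
    exact ENNReal.one_ne_top
  -- pointwise a.e. identity
  have hae : ∀ᵐ x ∂(volume : Measure ℝ),
      Gf ν b a C x * (Nf ν b a B x / Nf ν b a Set.univ x)
        = ∫⁻ y in B, jden b a C x y ∂ν := by
    filter_upwards [hGfin] with x hGx
    rcases le_or_gt x 0 with hx | hx
    · have hz : ∀ y, jden b a C x y = 0 := jden_zero b a C (not_lt.mpr hx)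
      have hG0 : Gf ν b a C x = 0 := by
        rw [Gf]; simp [hz]
      rw [hG0, zero_mul]
      simp [hz]
    · have hc0 : (0:ℝ) < x ^ (b - 1) / C := by positivity
      set c := ENNReal.ofReal (x ^ (b - 1) / C) with hc
      have hcne : c ≠ 0 := by
        simp only [hc, ne_eq, ENNReal.ofReal_eq_zero, not_le]; exact hc0
      have hctop : c ≠ ⊤ := ENNReal.ofReal_ne_top
      rw [setB_eq ν b a C hx hC B, Gf_eq ν b a C hx hC]
      have hDfin : Nf ν b a Set.univ x ≠ ⊤ := by
        intro hD
        rw [Gf_eq ν b a C hx hC, hD, ENNReal.mul_top hcne] at hGx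
        exact (lt_irrefl _ hGx).elim
      rcases eq_or_ne (Nf ν b a Set.univ x) 0 with hD0 | hDne
      · have hN0 : Nf ν b a B x = 0 := by
          refine le_antisymm ?_ (zero_le ..)
          rw [← hD0]
          exact lintegral_mono_set (by rw [Set.univ_inter]; exact Set.inter_subset_right)
        rw [hD0, hN0]
        simp
      · calc c * Nf ν b a Set.univ x * (Nf ν b a B x / Nf ν b a Set.univ x)
            = c * (Nf ν b a B x / Nf ν b a Set.univ x * Nf ν b a Set.univ x) := by ring
          _ = c * Nf ν b a B x := by rw [ENNReal.div_mul_cancel hDne hDfin]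
  -- transform the RHS
  rw [hρ, restrict_withDensity hA,
    lintegral_withDensity_eq_lintegral_mul _ hGmeas hFmeas]
  have hres : ∀ᵐ x ∂(volume.restrict A),
      (Gf ν b a C * fun x => Nf ν b a B x / Nf ν b a Set.univ x) x
        = ∫⁻ y in B, jden b a C x y ∂ν := ae_restrict_of_ae hae
  rw [lintegral_congr_ae hres]
  -- compute the LHS
  have hS : MeasurableSet {p : ℝ × ℝ | p.1 * p.2 ∈ A ∧ p.1 ∈ B} :=
    ((measurable_fst.mul measurable_snd) hA).inter (measurable_fst hB)
  rw [Measure.prod_apply hS]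
  have hae2 : ∀ᵐ y ∂ν, π (Prod.mk y ⁻¹' {p : ℝ × ℝ | p.1 * p.2 ∈ A ∧ p.1 ∈ B})
      = B.indicator (fun y => ∫⁻ x in A, jden b a C x y) y := by
    filter_upwards [ae_pos hν] with y hy
    by_cases hyB : y ∈ B
    · have : Prod.mk y ⁻¹' {p : ℝ × ℝ | p.1 * p.2 ∈ A ∧ p.1 ∈ B} = {u | y * u ∈ A} := by
        ext u; simp [hyB]
      rw [this, Set.indicator_of_mem hyB]
      exact kernel_formula b a C hy hA
    · have : Prod.mk y ⁻¹' {p : ℝ × ℝ | p.1 * p.2 ∈ A ∧ p.1 ∈ B} = ∅ := by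
        ext u; simp [hyB]
      rw [this, Set.indicator_of_notMem hyB, measure_empty]
  rw [lintegral_congr_ae hae2,
    lintegral_indicator hB]
  exact lintegral_lintegral_swap (μ := ν.restrict B) (ν := volume.restrict A)
    (f := fun y x => jden b a C x y)
    ((meas_jden b a C).comp measurable_swap).aemeasurable

end ASPGRBaux3

end auxx

open ASPGRBaux ASPGRBaux2 ASPGRBaux3

/-- The Beta(a, b) distribution on `(0,1)`. -/
def betaMeasure (a b : ℝ) : Measure ℝ :=
  volume.withDensity fun x =>
    ENNReal.ofReal (if 0 < x ∧ x < 1 then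
      x ^ (a - 1) * (1 - x) ^ (b - 1)
        / (Real.Gamma a * Real.Gamma b / Real.Gamma (a + b)) else 0)

/-- Terminal transition law of a gamma random bridge `Γ_t = R γ_{tT}` (with `R ~ ν`
independent of the gamma bridge `γ_{·T}` with activity `m`; recall `Γ_T = R` and
`γ_{sT} ~ Beta(ms, m(T-s))`): for `0 ≤ s < T`,
`P[Γ_T ∈ dy | Γ_s = x] = 1_{y>x}(y-x)^{m(T-s)-1} y^{1-mT} ν(dy) / ∫_x^∞ (z-x)^{m(T-s)-1} z^{1-mT} ν(dz)`,
stated in the equivalent joint form `P[Γ_s ∈ A, Γ_T ∈ B] = ∫_A κ(x)(B) P[Γ_s ∈ dx]`. -/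
theorem asp_grb_terminal_transition
    {Ω : Type*} [MeasurableSpace Ω] (μ : Measure Ω) [IsProbabilityMeasure μ]
    (m s T : ℝ) (hm : 0 < m) (hs : 0 ≤ s) (hsT : s < T)
    (ν : Measure ℝ) [IsProbabilityMeasure ν] (hν : ν (Set.Iic 0) = 0)
    (R β : Ω → ℝ)
    (hR : Measure.map R μ = ν)
    (hβ : Measure.map β μ =
      if s = 0 then Measure.dirac 0 else _root_.betaMeasure (m * s) (m * (T - s)))
    (hindep : IndepFun R β μ) :
    ∀ A B : Set ℝ, MeasurableSet A → MeasurableSet B →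
      μ {ω | R ω * β ω ∈ A ∧ R ω ∈ B}
        = ∫⁻ x in A,
            (∫⁻ y in B ∩ Set.Ioi x,
                ENNReal.ofReal ((y - x) ^ (m * (T - s) - 1) * y ^ (1 - m * T)) ∂ν)
              / (∫⁻ z in Set.Ioi x,
                  ENNReal.ofReal ((z - x) ^ (m * (T - s) - 1) * z ^ (1 - m * T)) ∂ν)
            ∂(Measure.map (fun ω => R ω * β ω) μ) := by
  classical
  intro A B hA hB
  -- ae-measurability of R and β
  have hRm : AEMeasurable R μ := by
    by_contra h
    rw [Measure.map_of_not_aemeasurable h] at hR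
    have := measure_univ (μ := ν)
    rw [← hR] at this
    simp at this
  have hβm : AEMeasurable β μ := by
    by_contra h
    rw [Measure.map_of_not_aemeasurable h] at hβ
    by_cases hs0 : s = 0
    · rw [if_pos hs0] at hβ
      have := measure_univ (μ := (Measure.dirac (0:ℝ)))
      rw [← hβ] at this
      simp at this
    · rw [if_neg hs0] at hβ
      have hb : 0 < m * s := mul_pos hm (lt_of_le_of_ne hs (Ne.symm hs0))
      have ha : 0 < m * (T - s) := mul_pos hm (by linarith)
      have hC : 0 < Real.Gamma (m * s) * Real.Gamma (m * (T - s))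
          / Real.Gamma (m * s + m * (T - s)) := by
        have := Real.Gamma_pos_of_pos hb
        have := Real.Gamma_pos_of_pos ha
        have := Real.Gamma_pos_of_pos (by linarith : (0:ℝ) < m * s + m * (T - s))
        positivity
      have h0 : _root_.betaMeasure (m * s) (m * (T - s)) = 0 := hβ.symm
      have hdens : (fun x : ℝ => ENNReal.ofReal (if 0 < x ∧ x < 1 then
          x ^ (m * s - 1) * (1 - x) ^ (m * (T - s) - 1)
            / (Real.Gamma (m * s) * Real.Gamma (m * (T - s))
              / Real.Gamma (m * s + m * (T - s))) else 0))
          =ᵐ[volume] 0 := by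
        apply withDensity_eq_zero ?_ h0
        exact (meas_bden (m * s) (m * (T - s)) _).aemeasurable
      have hsub : Set.Ioo (0:ℝ) 1 ⊆ {x : ℝ | ¬ (ENNReal.ofReal (if 0 < x ∧ x < 1 then
          x ^ (m * s - 1) * (1 - x) ^ (m * (T - s) - 1)
            / (Real.Gamma (m * s) * Real.Gamma (m * (T - s))
              / Real.Gamma (m * s + m * (T - s))) else 0) = 0)} := by
        intro x hx
        simp only [Set.mem_setOf_eq, if_pos (Set.mem_Ioo.mp hx), ENNReal.ofReal_eq_zero, not_le]
        have h1 := Real.rpow_pos_of_pos hx.1 (m * s - 1)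
        have h2 := Real.rpow_pos_of_pos (by linarith [hx.2] : (0:ℝ) < 1 - x) (m * (T - s) - 1)
        positivity
      have := measure_mono_null hsub hdens
      rw [Real.volume_Ioo] at this
      simp at this
  -- joint law
  have hpair : Measure.map (fun ω => (R ω, β ω)) μ
      = ν.prod (if s = 0 then Measure.dirac 0 else _root_.betaMeasure (m * s) (m * (T - s))) := by
    rw [← hR, ← hβ]
    exact (indepFun_iff_map_prod_eq_prod_map_map hRm hβm).mp hindep
  have hS : MeasurableSet {p : ℝ × ℝ | p.1 * p.2 ∈ A ∧ p.1 ∈ B} :=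
    ((measurable_fst.mul measurable_snd) hA).inter (measurable_fst hB)
  have hLHS : μ {ω | R ω * β ω ∈ A ∧ R ω ∈ B}
      = (ν.prod (if s = 0 then Measure.dirac 0 else _root_.betaMeasure (m * s) (m * (T - s))))
        {p : ℝ × ℝ | p.1 * p.2 ∈ A ∧ p.1 ∈ B} := by
    rw [← hpair, Measure.map_apply_of_aemeasurable (hRm.prodMk hβm) hS]
    rfl
  have hcomp : (fun ω => R ω * β ω)
      = (fun p : ℝ × ℝ => p.1 * p.2) ∘ (fun ω => (R ω, β ω)) := rfl
  have hmapmul : Measure.map (fun ω => R ω * β ω) μ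
      = Measure.map (fun p : ℝ × ℝ => p.1 * p.2)
        (ν.prod (if s = 0 then Measure.dirac 0 else _root_.betaMeasure (m * s) (m * (T - s)))) := by
    rw [← hpair, hcomp]
    exact (AEMeasurable.map_map_of_aemeasurable
      (measurable_fst.mul measurable_snd).aemeasurable (hRm.prodMk hβm)).symm
  by_cases hs0 : s = 0
  · -- degenerate case: β = 0 a.s.
    subst hs0
    rw [if_pos rfl] at hpair hLHS hmapmul
    -- the product-with-dirac measure of S
    have hLHS2 : (ν.prod (Measure.dirac (0:ℝ))) {p : ℝ × ℝ | p.1 * p.2 ∈ A ∧ p.1 ∈ B}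
        = if (0:ℝ) ∈ A then ν B else 0 := by
      rw [Measure.prod_apply hS]
      have hptw : ∀ y : ℝ, (Measure.dirac (0:ℝ))
          (Prod.mk y ⁻¹' {p : ℝ × ℝ | p.1 * p.2 ∈ A ∧ p.1 ∈ B})
          = ({y : ℝ | (0:ℝ) ∈ A ∧ y ∈ B}).indicator (fun _ => 1) y := by
        intro y
        have hpre : Prod.mk y ⁻¹' {p : ℝ × ℝ | p.1 * p.2 ∈ A ∧ p.1 ∈ B}
            = {u : ℝ | y * u ∈ A ∧ y ∈ B} := rfl
        rw [hpre, Measure.dirac_apply' _ (by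
          exact ((measurable_const_mul y) hA).inter (MeasurableSet.const _))]
        by_cases h : (0:ℝ) ∈ A ∧ y ∈ B
        · rw [Set.indicator_of_mem (by simpa [mul_zero] using h),
            Set.indicator_of_mem (by exact h)]
          rfl
        · rw [Set.indicator_of_notMem (by simpa [mul_zero] using h),
            Set.indicator_of_notMem (by exact h)]
      rw [lintegral_congr hptw, lintegral_indicator (by
        by_cases h0A : (0:ℝ) ∈ A
        · simpa [h0A] using hB
        · simp [h0A])]
      by_cases h0A : (0:ℝ) ∈ A
      · simp only [h0A, true_and]
        rw [setLIntegral_one]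
        simp [h0A]
      · simp [h0A]
    -- the image measure is dirac 0
    have hβ0 : ∀ᵐ ω ∂μ, β ω = 0 := by
      have h1 : μ (β ⁻¹' {(0:ℝ)}ᶜ) = 0 := by
        rw [← Measure.map_apply_of_aemeasurable hβm (MeasurableSet.singleton (0:ℝ)).compl]
        rw [if_pos rfl] at hβ
        rw [hβ, Measure.dirac_apply' _ (MeasurableSet.singleton (0:ℝ)).compl]
        simp
      rw [ae_iff]
      exact h1
    have hmul0 : (fun ω => R ω * β ω) =ᵐ[μ] (fun _ => (0:ℝ)) := by
      filter_upwards [hβ0] with ω hω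
      rw [hω, mul_zero]
    have hρdirac : Measure.map (fun ω => R ω * β ω) μ = Measure.dirac (0:ℝ) := by
      rw [Measure.map_congr hmul0, Measure.map_const, measure_univ, one_smul]
    rw [hLHS, hLHS2, hρdirac, setLIntegral_dirac _ A]
    by_cases h0A : (0:ℝ) ∈ A
    · rw [if_pos h0A, if_pos h0A]
      have hden : ν (Set.Ioi (0:ℝ)) = 1 := by
        have h1 : ν (Set.Ioi (0:ℝ) ∪ Set.Iic 0) = ν Set.univ := by
          rw [Set.union_comm, Set.Iic_union_Ioi]
        have h2 : ν Set.univ ≤ ν (Set.Ioi (0:ℝ)) + ν (Set.Iic 0) := by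
          rw [← h1]; exact measure_union_le _ _
        rw [hν, add_zero] at h2
        rw [measure_univ] at h2
        exact le_antisymm prob_le_one h2
      have hnum : (∫⁻ y in B ∩ Set.Ioi (0:ℝ),
          ENNReal.ofReal ((y - 0) ^ (m * (T - 0) - 1) * y ^ (1 - m * T)) ∂ν) = ν B := by
        have hone : ∀ y ∈ B ∩ Set.Ioi (0:ℝ),
            ENNReal.ofReal ((y - 0) ^ (m * (T - 0) - 1) * y ^ (1 - m * T)) = 1 := by
          intro y hy
          have hy0 : 0 < y := hy.2
          rw [sub_zero, ← Real.rpow_add hy0,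
            show m * (T - 0) - 1 + (1 - m * T) = 0 by ring, Real.rpow_zero]
          simp
        rw [setLIntegral_congr_fun (hB.inter measurableSet_Ioi)
          hone, setLIntegral_one]
        have hle : ν B ≤ ν (B ∩ Set.Ioi (0:ℝ)) := by
          calc ν B ≤ ν ((B ∩ Set.Ioi 0) ∪ Set.Iic 0) := by
                refine measure_mono fun y hy => ?_
                rcases le_or_gt y 0 with h | h
                · exact Or.inr h
                · exact Or.inl ⟨hy, h⟩
            _ ≤ ν (B ∩ Set.Ioi 0) + ν (Set.Iic 0) := measure_union_le _ _
            _ = ν (B ∩ Set.Ioi 0) := by rw [hν, add_zero]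
        exact le_antisymm (measure_mono Set.inter_subset_left) hle
      have hdenom : (∫⁻ z in Set.Ioi (0:ℝ),
          ENNReal.ofReal ((z - 0) ^ (m * (T - 0) - 1) * z ^ (1 - m * T)) ∂ν) = 1 := by
        have hone : ∀ z ∈ Set.Ioi (0:ℝ),
            ENNReal.ofReal ((z - 0) ^ (m * (T - 0) - 1) * z ^ (1 - m * T)) = 1 := by
          intro z hz
          rw [sub_zero, ← Real.rpow_add hz,
            show m * (T - 0) - 1 + (1 - m * T) = 0 by ring, Real.rpow_zero]
          simp
        rw [setLIntegral_congr_fun measurableSet_Ioi hone,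
          setLIntegral_one, hden]
      rw [hnum, hdenom]
      simp
    · rw [if_neg h0A, if_neg h0A]
  · -- main case: s > 0
    rw [if_neg hs0] at hpair hLHS hmapmul hβ
    have hspos : 0 < s := lt_of_le_of_ne hs (Ne.symm hs0)
    set b := m * s with hbdef
    set a := m * (T - s) with hadef
    set C := Real.Gamma b * Real.Gamma a / Real.Gamma (b + a) with hCdef
    have hb : 0 < b := mul_pos hm hspos
    have ha : 0 < a := mul_pos hm (by linarith)
    have hC : 0 < C := by
      have := Real.Gamma_pos_of_pos hb
      have := Real.Gamma_pos_of_pos ha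
      have := Real.Gamma_pos_of_pos (by linarith : (0:ℝ) < b + a)
      positivity
    have hbeta : _root_.betaMeasure b a = volume.withDensity (bden b a C) := rfl
    have hprob : IsProbabilityMeasure (volume.withDensity (bden b a C)) := by
      rw [← hbeta, ← hβ]
      exact Measure.isProbabilityMeasure_map hβm
    have hmain := main_pos ν hν b a C hC hprob A B hA hB
    rw [hLHS, hmapmul, hbeta]
    have hexp : 1 - m * T = 1 - (b + a) := by rw [hbdef, hadef]; ring
    rw [hexp]
    rw [hmain]
    simp only [Nf, Kf, Set.univ_inter]

end
end

section
/- Let {ξ_t} be an n-dimensional gamma process under Q with Q[ξ_t ∈ dx] = Π_i x_i^{t-1} e^{-x_i}/Γ(t) dx_i, R_t = Σ_i ξ_t^{(i)}, and Ψ_t(x) = ∫_x^∞ f_{n(1-t)}(z - x)/f_n(z) ν(dz) where f_t(x) = x^{t-1}e^{-x}/Γ(t) and ν is a probability measure on (0,∞). Then {Ψ_t(R_t)}_{0 ≤ t < 1} is a martingale with respect to the filtration generated by {ξ_t}, with Ψ_0(R_0) = 1. -/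
open MeasureTheory ProbabilityTheory

noncomputable section

open Set
open scoped ENNReal

lemma measurable_gammaDens (t : ℝ) : Measurable (gammaDens t) := by
  unfold gammaDens
  exact Measurable.ite (measurableSet_lt measurable_const measurable_id)
    (((measurable_id.pow_const _).mul measurable_id.neg.exp).div_const _) measurable_const

lemma gammaDens_nonneg {t : ℝ} (ht : 0 < t) (x : ℝ) : 0 ≤ gammaDens t x := by
  unfold gammaDens
  split_ifs with h
  · have := Real.Gamma_pos_of_pos ht
    positivity
  · exact le_refl _

lemma gammaDens_pos {t x : ℝ} (ht : 0 < t) (hx : 0 < x) : 0 < gammaDens t x := by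
  unfold gammaDens
  rw [if_pos hx]
  have := Real.Gamma_pos_of_pos ht
  positivity

lemma gammaDens_of_nonpos {t x : ℝ} (hx : x ≤ 0) : gammaDens t x = 0 := by
  unfold gammaDens
  rw [if_neg (not_lt.2 hx)]

lemma beta_aux {a b w : ℝ} (ha : 0 < a) (hb : 0 < b) (hw : 0 < w) :
    ∫ x in (0:ℝ)..w, x ^ (b - 1) * (w - x) ^ (a - 1)
      = w ^ (a + b - 1) * (Real.Gamma b * Real.Gamma a / Real.Gamma (b + a)) := by
  have hC : ∫ x in (0:ℝ)..w, (x:ℂ) ^ ((b:ℂ) - 1) * ((w:ℂ) - (x:ℂ)) ^ ((a:ℂ) - 1)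
      = (w:ℂ) ^ ((b:ℂ) + (a:ℂ) - 1) * Complex.betaIntegral b a :=
    Complex.betaIntegral_scaled (b:ℂ) (a:ℂ) hw
  have hbeta : Complex.betaIntegral b a
      = ((Real.Gamma b * Real.Gamma a / Real.Gamma (b + a) : ℝ) : ℂ) := by
    have h1 := Complex.Gamma_mul_Gamma_eq_betaIntegral (s := (b:ℂ)) (t := (a:ℂ))
      (by simpa using hb) (by simpa using ha)
    have h2 : ((b:ℂ) + (a:ℂ)) = ((b + a : ℝ) : ℂ) := by push_cast; ring
    rw [h2, Complex.Gamma_ofReal, Complex.Gamma_ofReal, Complex.Gamma_ofReal] at h1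
    have hG : (Real.Gamma (b + a) : ℂ) ≠ 0 := by
      simp only [ne_eq, Complex.ofReal_eq_zero]
      exact (Real.Gamma_pos_of_pos (by linarith)).ne'
    field_simp
    rw [Complex.ofReal_div, Complex.ofReal_mul, h1, mul_div_right_comm, div_self hG, one_mul]
  have hEq : EqOn (fun x : ℝ => ((x ^ (b - 1) * (w - x) ^ (a - 1) : ℝ) : ℂ))
      (fun x : ℝ => (x:ℂ) ^ ((b:ℂ) - 1) * ((w:ℂ) - (x:ℂ)) ^ ((a:ℂ) - 1)) (uIcc 0 w) := by
    intro x hx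
    rw [uIcc_of_le hw.le] at hx
    have hx0 : (0:ℝ) ≤ x := hx.1
    have hwx : (0:ℝ) ≤ w - x := by linarith [hx.2]
    simp only
    rw [Complex.ofReal_mul, Complex.ofReal_cpow hx0, Complex.ofReal_cpow hwx]
    push_cast
    ring
  have hL : ((∫ x in (0:ℝ)..w, x ^ (b - 1) * (w - x) ^ (a - 1) : ℝ) : ℂ)
      = (w:ℂ) ^ ((b:ℂ) + (a:ℂ) - 1) * Complex.betaIntegral b a := by
    rw [← intervalIntegral.integral_ofReal, intervalIntegral.integral_congr hEq, hC]
  rw [hbeta] at hL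
  have hw' : ((w:ℂ)) ^ ((b:ℂ) + (a:ℂ) - 1) = ((w ^ (a + b - 1) : ℝ) : ℂ) := by
    have : ((b:ℂ) + (a:ℂ) - 1) = ((a + b - 1 : ℝ) : ℂ) := by push_cast; ring
    rw [this, Complex.ofReal_cpow hw.le]
  rw [hw', ← Complex.ofReal_mul] at hL
  exact_mod_cast hL

lemma beta_integrable {a b w : ℝ} (ha : 0 < a) (hb : 0 < b) (hw : 0 < w) :
    IntervalIntegrable (fun x : ℝ => x ^ (b - 1) * (w - x) ^ (a - 1)) volume 0 w := by
  have h1 : IntervalIntegrable (fun x : ℝ => x ^ (b - 1) * (w - x) ^ (a - 1)) volume 0 (w/2) := by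
    apply IntervalIntegrable.mul_continuousOn
    · exact intervalIntegral.intervalIntegrable_rpow' (by linarith)
    · refine (continuousOn_const.sub continuousOn_id).rpow_const fun x hx => Or.inl ?_
      rw [uIcc_of_le (by linarith)] at hx
      simp only [Pi.sub_apply, id_eq]
      intro h
      have := hx.2
      nlinarith
  have h2 : IntervalIntegrable (fun x : ℝ => x ^ (b - 1) * (w - x) ^ (a - 1)) volume (w/2) w := by
    apply IntervalIntegrable.continuousOn_mul
    · have base : IntervalIntegrable (fun y : ℝ => y ^ (a - 1)) volume 0 (w/2) :=
        intervalIntegral.intervalIntegrable_rpow' (by linarith)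
      have h := base.comp_sub_left w
      have he : w - 0 = w := by ring
      have he2 : w - w/2 = w/2 := by ring
      rw [he, he2] at h
      exact h.symm
    · refine continuousOn_id.rpow_const fun x hx => Or.inl ?_
      rw [uIcc_of_le (by linarith)] at hx
      simp only [id_eq]
      intro h
      have := hx.1
      nlinarith
  exact h1.trans h2
lemma gammaDens_conv {a b : ℝ} (ha : 0 < a) (hb : 0 < b) (w : ℝ) :
    ∫⁻ y, ENNReal.ofReal (gammaDens b y * gammaDens a (w - y))
      = ENNReal.ofReal (gammaDens (a + b) w) := by
  rcases le_or_gt w 0 with hw | hw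
  · have h0 : ∀ y : ℝ, gammaDens b y * gammaDens a (w - y) = 0 := fun y => by
      rcases le_or_gt y 0 with hy | hy
      · rw [gammaDens_of_nonpos hy, zero_mul]
      · rw [gammaDens_of_nonpos (by linarith : w - y ≤ 0), mul_zero]
    simp [h0, gammaDens_of_nonpos hw]
  · have hΓa := (Real.Gamma_pos_of_pos ha).ne'
    have hΓb := (Real.Gamma_pos_of_pos hb).ne'
    set C : ℝ := Real.exp (-w) / (Real.Gamma b * Real.Gamma a) with hC
    have hCpos : 0 < C := by
      have := Real.Gamma_pos_of_pos ha
      have := Real.Gamma_pos_of_pos hb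
      positivity
    have hsupp : Function.support
        (fun y => ENNReal.ofReal (gammaDens b y * gammaDens a (w - y))) ⊆ Ioo 0 w := by
      intro y hy
      by_contra hmem
      apply hy
      simp only [mem_Ioo, not_and_or, not_lt] at hmem
      rcases hmem with hy0 | hyw
      · simp [gammaDens_of_nonpos hy0]
      · simp [gammaDens_of_nonpos (by linarith : w - y ≤ 0)]
    have hcong : ∀ y ∈ Ioo (0:ℝ) w, gammaDens b y * gammaDens a (w - y)
        = C * (y ^ (b - 1) * (w - y) ^ (a - 1)) := by
      intro y hy
      have hexp : Real.exp (-y) * Real.exp (-(w - y)) = Real.exp (-w) := by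
        rw [← Real.exp_add]; congr 1; ring
      unfold gammaDens
      rw [if_pos hy.1, if_pos (by linarith [hy.2] : 0 < w - y), hC, ← hexp]
      ring
    have hInt : IntegrableOn (fun y : ℝ => C * (y ^ (b - 1) * (w - y) ^ (a - 1)))
        (Ioo 0 w) volume := by
      have h := (beta_integrable ha hb hw).1
      exact (h.mono_set Ioo_subset_Ioc_self).const_mul C
    have hnn : 0 ≤ᵐ[volume.restrict (Ioo 0 w)]
        fun y : ℝ => C * (y ^ (b - 1) * (w - y) ^ (a - 1)) := by
      refine (ae_restrict_iff' measurableSet_Ioo).2 (ae_of_all _ fun y hy => ?_)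
      have h1 : (0:ℝ) < y := hy.1
      have h2 : (0:ℝ) < w - y := by linarith [hy.2]
      positivity
    have hval : ∫ y in Ioo (0:ℝ) w, C * (y ^ (b - 1) * (w - y) ^ (a - 1))
        = gammaDens (a + b) w := by
      rw [integral_const_mul, ← integral_Ioc_eq_integral_Ioo,
        ← intervalIntegral.integral_of_le hw.le, beta_aux ha hb hw]
      unfold gammaDens
      rw [if_pos hw, show b + a = a + b from by ring, hC]
      have h1 : Real.exp (-w) / (Real.Gamma b * Real.Gamma a)
          * (w ^ (a + b - 1) * (Real.Gamma b * Real.Gamma a / Real.Gamma (a + b)))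
          = w ^ (a + b - 1) * Real.exp (-w) / Real.Gamma (a + b)
            * (Real.Gamma b * Real.Gamma a / (Real.Gamma b * Real.Gamma a)) := by ring
      rw [h1, div_self (mul_ne_zero hΓb hΓa), mul_one]
    rw [← setLIntegral_eq_of_support_subset hsupp,
      setLIntegral_congr_fun measurableSet_Ioo
        (fun y hy => by rw [hcong y hy]),
      ← ofReal_integral_eq_lintegral_ofReal hInt hnn, hval]

def aspG (n : ℕ) (ν : Measure ℝ) (t x : ℝ) : ℝ≥0∞ :=
  ∫⁻ z, ENNReal.ofReal (gammaDens ((n:ℝ) * (1 - t)) (z - x) / gammaDens n z) ∂ν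

lemma aspG_eq_restrict (n : ℕ) (ν : Measure ℝ) (t x : ℝ) :
    aspG n ν t x
      = ∫⁻ z in Ioi x, ENNReal.ofReal (gammaDens ((n:ℝ) * (1 - t)) (z - x) / gammaDens n z) ∂ν := by
  refine (setLIntegral_eq_of_support_subset fun z hz => ?_).symm
  by_contra hmem
  apply hz
  simp only [mem_Ioi, not_lt] at hmem
  simp [gammaDens_of_nonpos (by linarith : z - x ≤ 0)]

lemma measurable_aspG (n : ℕ) (ν : Measure ℝ) [SFinite ν] (t : ℝ) :
    Measurable (aspG n ν t) := by
  apply Measurable.lintegral_prod_right'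
    (f := fun p : ℝ × ℝ => ENNReal.ofReal (gammaDens ((n:ℝ) * (1 - t)) (p.2 - p.1) / gammaDens n p.2))
  exact (((measurable_gammaDens _).comp (measurable_snd.sub measurable_fst)).div
    ((measurable_gammaDens _).comp measurable_snd)).ennreal_ofReal

lemma aspG_conv (n : ℕ) (ν : Measure ℝ) [SFinite ν] {s t : ℝ}
    (ha : 0 < (n:ℝ) * (1 - t)) (hb : 0 < (n:ℝ) * (t - s)) (x : ℝ) :
    ∫⁻ y, ENNReal.ofReal (gammaDens ((n:ℝ) * (t - s)) y) * aspG n ν t (x + y)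
      = aspG n ν s x := by
  set a := (n:ℝ) * (1 - t) with hadef
  set b := (n:ℝ) * (t - s) with hbdef
  have hab : a + b = (n:ℝ) * (1 - s) := by rw [hadef, hbdef]; ring
  have meas1 : ∀ y : ℝ, Measurable fun z : ℝ =>
      ENNReal.ofReal (gammaDens a (z - (x + y)) / gammaDens n z) := fun y =>
    (((measurable_gammaDens _).comp (measurable_id.sub_const _)).div
      (measurable_gammaDens _)).ennreal_ofReal
  have meas2 : ∀ z : ℝ, Measurable fun y : ℝ =>
      ENNReal.ofReal (gammaDens b y * gammaDens a (z - x - y)) := fun z =>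
    ((measurable_gammaDens _).mul ((measurable_gammaDens _).comp
      (measurable_const.sub measurable_id))).ennreal_ofReal
  have measJ : Measurable (Function.uncurry fun y z : ℝ =>
      ENNReal.ofReal (gammaDens b y * (gammaDens a (z - (x + y)) / gammaDens n z))) := by
    apply Measurable.ennreal_ofReal
    exact ((measurable_gammaDens _).comp measurable_fst).mul
      ((((measurable_gammaDens _).comp (measurable_snd.sub
        ((measurable_const.add measurable_fst)))).div
        ((measurable_gammaDens _).comp measurable_snd)))
  calc ∫⁻ y, ENNReal.ofReal (gammaDens b y) * aspG n ν t (x + y)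
      = ∫⁻ y, ∫⁻ z, ENNReal.ofReal
          (gammaDens b y * (gammaDens a (z - (x + y)) / gammaDens n z)) ∂ν := by
        refine lintegral_congr fun y => ?_
        rw [aspG, ← lintegral_const_mul _ (meas1 y)]
        refine lintegral_congr fun z => ?_
        rw [← ENNReal.ofReal_mul (gammaDens_nonneg hb y)]
    _ = ∫⁻ z, ∫⁻ y, ENNReal.ofReal
          (gammaDens b y * (gammaDens a (z - (x + y)) / gammaDens n z)) ∂volume ∂ν :=
        lintegral_lintegral_swap measJ.aemeasurable
    _ = ∫⁻ z, (∫⁻ y, ENNReal.ofReal (gammaDens b y * gammaDens a ((z - x) - y)))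
          * ENNReal.ofReal (gammaDens n z)⁻¹ ∂ν := by
        refine lintegral_congr fun z => ?_
        rw [← lintegral_mul_const _ (meas2 z)]
        refine lintegral_congr fun y => ?_
        rw [← ENNReal.ofReal_mul (mul_nonneg (gammaDens_nonneg hb y)
          (gammaDens_nonneg ha _))]
        congr 1
        rw [show z - (x + y) = z - x - y from by ring, div_eq_mul_inv]
        ring
    _ = ∫⁻ z, ENNReal.ofReal (gammaDens ((n:ℝ) * (1 - s)) (z - x) / gammaDens n z) ∂ν := by
        refine lintegral_congr fun z => ?_
        rw [gammaDens_conv ha hb (z - x), hab, div_eq_mul_inv,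
          ENNReal.ofReal_mul (gammaDens_nonneg (by linarith : (0:ℝ) < (n:ℝ) * (1 - s)) _)]
    _ = aspG n ν s x := rfl

lemma aspG_zero (n : ℕ) (ν : Measure ℝ) (hn : 0 < (n:ℝ)) :
    aspG n ν 0 0 = ν (Ioi 0) := by
  have h : ∀ z : ℝ, ENNReal.ofReal (gammaDens ((n:ℝ) * (1 - 0)) (z - 0) / gammaDens n z)
      = (Ioi (0:ℝ)).indicator (1 : ℝ → ℝ≥0∞) z := by
    intro z
    rcases lt_or_ge 0 z with hz | hz
    · rw [indicator_of_mem (show z ∈ Ioi (0:ℝ) from hz),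
        show (n:ℝ) * (1 - 0) = (n:ℝ) from by ring, sub_zero,
        div_self (gammaDens_pos hn hz).ne', ENNReal.ofReal_one, Pi.one_apply]
    · rw [indicator_of_notMem (show z ∉ Ioi (0:ℝ) from by simpa using hz),
        gammaDens_of_nonpos (show z - 0 ≤ 0 from by linarith), zero_div, ENNReal.ofReal_zero]
  rw [aspG]
  simp_rw [h]
  exact lintegral_indicator_one measurableSet_Ioi
open ProbabilityTheory

/-- For an `n`-dimensional gamma process `ξ` under `Q` (independent standard gamma
components, so that `R_t = ∑ i, ξ_t^{(i)}` is a gamma process with shape `nt`), and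
`Ψ_t(x) = ∫_x^∞ f_{n(1-t)}(z-x)/f_n(z) ν(dz)`, the process `{Ψ_t(R_t)}_{0≤t<1}` is a
martingale with respect to the filtration generated by `ξ`, with `Ψ_0(R_0) = Ψ_0(0) = 1`. -/
theorem asp_density_process_martingale
    {Ω : Type*} {mΩ : MeasurableSpace Ω} (μ : Measure Ω) [IsProbabilityMeasure μ]
    (n : ℕ) (hn : 2 ≤ n)
    (ν : Measure ℝ) [IsProbabilityMeasure ν] (hν : ν (Set.Iic 0) = 0)
    (ξ : ℝ → Ω → Fin n → ℝ) (ℱ : Filtration ℝ mΩ)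
    (hℱ : ∀ t : ℝ, (ℱ t : MeasurableSpace Ω)
      = ⨆ s ∈ Set.Icc (0 : ℝ) t, MeasurableSpace.comap (ξ s) inferInstance)
    (hstart : ∀ᵐ ω ∂μ, ξ 0 ω = 0)
    (hlaw : ∀ s t : ℝ, 0 ≤ s → s < t →
      Measure.map (fun ω => ∑ i, ξ t ω i - ∑ i, ξ s ω i) μ
        = gammaMeasure ((n : ℝ) * (t - s)) 1)
    (hindep : ∀ s t : ℝ, 0 ≤ s → s < t →
      Indep (ℱ s) (MeasurableSpace.comap (fun ω => ∑ i, ξ t ω i - ∑ i, ξ s ω i)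
        inferInstance) μ)
    (Ψ : ℝ → ℝ → ℝ)
    (hΨ : ∀ t x : ℝ, Ψ t x
      = ∫ z in Set.Ioi x, gammaDens ((n : ℝ) * (1 - t)) (z - x) / gammaDens n z ∂ν) :
    (∀ s t : ℝ, 0 ≤ s → s ≤ t → t < 1 →
      μ[(fun ω => Ψ t (∑ i, ξ t ω i)) | ℱ s] =ᵐ[μ] fun ω => Ψ s (∑ i, ξ s ω i)) ∧
    Ψ 0 0 = 1 := by
  have hn0 : (0 : ℝ) < n := by
    have : (0:ℕ) < n := by omega
    exact_mod_cast this
  have hμ1 : ν (Set.Ioi 0) = 1 := by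
    have h := measure_compl (measurableSet_Iic : MeasurableSet (Set.Iic (0:ℝ)))
      (measure_ne_top ν _)
    rw [hν, Set.compl_Iic] at h
    simpa using h
  -- measurability of the process
  have hξmeas : ∀ t : ℝ, 0 ≤ t → Measurable[ℱ t] (ξ t) := by
    intro t ht
    rw [measurable_iff_comap_le, hℱ t]
    exact le_iSup₂ (f := fun s (_ : s ∈ Set.Icc (0:ℝ) t) =>
      MeasurableSpace.comap (ξ s) inferInstance) t ⟨ht, le_rfl⟩
  set R : ℝ → Ω → ℝ := fun t ω => ∑ i, ξ t ω i with hR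
  have hRmeasF : ∀ t : ℝ, 0 ≤ t → Measurable[ℱ t] (R t) := fun t ht =>
    Finset.measurable_sum _ fun i _ => (measurable_pi_apply i).comp (hξmeas t ht)
  have hRmeas : ∀ t : ℝ, 0 ≤ t → Measurable (R t) := fun t ht =>
    (hRmeasF t ht).mono (ℱ.le t) le_rfl
  -- Ψ in terms of aspG
  have hΨG : ∀ t x : ℝ, t < 1 → Ψ t x = (aspG n ν t x).toReal := by
    intro t x ht
    have ha : (0:ℝ) < (n:ℝ) * (1 - t) := mul_pos hn0 (by linarith)
    rw [hΨ, aspG_eq_restrict]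
    rw [integral_eq_lintegral_of_nonneg_ae]
    · refine (ae_restrict_iff' measurableSet_Ioi).2 (ae_of_all _ fun z _ =>
        div_nonneg (gammaDens_nonneg ha _) (gammaDens_nonneg hn0 _))
    · exact ((((measurable_gammaDens _).comp (measurable_id.sub_const x)).div
        (measurable_gammaDens _)).aestronglyMeasurable)
  have hnnΨ : ∀ t x : ℝ, t < 1 → 0 ≤ Ψ t x := fun t x ht => by
    rw [hΨG t x ht]; exact ENNReal.toReal_nonneg
  -- law of R t
  have hlawR : ∀ t : ℝ, 0 < t → Measure.map (R t) μ = gammaMeasure ((n:ℝ) * t) 1 := by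
    intro t ht
    have h0 : (fun ω => R t ω - R 0 ω) =ᵐ[μ] R t := by
      filter_upwards [hstart] with ω hω
      simp [hR, hω]
    have := hlaw 0 t le_rfl ht
    rw [show (fun ω => ∑ i, ξ t ω i - ∑ i, ξ 0 ω i) = fun ω => R t ω - R 0 ω from rfl,
      Measure.map_congr h0, sub_zero] at this
    exact this
  have hpdfmeas : ∀ a r : ℝ, Measurable (gammaPDF a r) := fun a r =>
    (measurable_gammaPDFReal a r).ennreal_ofReal
  -- gammaPDF agrees a.e. with gammaDens
  have hpdfd : ∀ b : ℝ, ∀ᵐ y ∂(volume : Measure ℝ),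
      gammaPDF b 1 y = ENNReal.ofReal (gammaDens b y) := by
    intro b
    have hne : ∀ᵐ y ∂(volume : Measure ℝ), y ≠ 0 := by
      refine ae_iff.2 ?_
      simp
    filter_upwards [hne] with y hy
    rcases lt_or_gt_of_ne hy with hy0 | hy0
    · rw [gammaPDF_of_neg hy0, gammaDens_of_nonpos hy0.le, ENNReal.ofReal_zero]
    · rw [gammaPDF_of_nonneg hy0.le]
      unfold gammaDens
      rw [if_pos hy0]
      congr 1
      rw [Real.one_rpow]
      ring_nf
  -- the gamma-kernel smoothing identity, in ℝ≥0∞ form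
  have hconv : ∀ s t : ℝ, 0 ≤ s → s < t → t < 1 → ∀ x : ℝ,
      ∫⁻ y, gammaPDF ((n:ℝ) * (t - s)) 1 y * aspG n ν t (x + y) = aspG n ν s x := by
    intro s t hs0 hst ht1 x
    have ha : (0:ℝ) < (n:ℝ) * (1 - t) := mul_pos hn0 (by linarith)
    have hb : (0:ℝ) < (n:ℝ) * (t - s) := mul_pos hn0 (by linarith)
    rw [← aspG_conv n ν ha hb x]
    refine lintegral_congr_ae ?_
    filter_upwards [hpdfd ((n:ℝ) * (t - s))] with y hy
    rw [hy]
  -- total mass of aspG t (R t) is 1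
  have hkey : ∀ t : ℝ, 0 ≤ t → t < 1 → ∫⁻ ω, aspG n ν t (R t ω) ∂μ = 1 := by
    intro t ht0 ht1
    rcases eq_or_lt_of_le ht0 with h0 | h0
    · have hc : (fun ω => aspG n ν t (R t ω)) =ᵐ[μ] fun _ => aspG n ν 0 0 := by
        filter_upwards [hstart] with ω hω
        rw [← h0]
        simp [hR, hω]
      rw [lintegral_congr_ae hc, lintegral_const, aspG_zero n ν hn0, hμ1, measure_univ, mul_one]
    · have hc := hconv 0 t le_rfl h0 ht1 0
      simp only [sub_zero, zero_add] at hc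
      rw [← lintegral_map (measurable_aspG n ν t) (hRmeas t ht0), hlawR t h0, gammaMeasure,
        lintegral_withDensity_eq_lintegral_mul _ (hpdfmeas _ _) (measurable_aspG n ν t)]
      rw [show (fun y => (gammaPDF ((n:ℝ) * t) 1 * aspG n ν t) y)
          = fun y => gammaPDF ((n:ℝ) * t) 1 y * aspG n ν t y from rfl]
      rw [hc, aspG_zero n ν hn0, hμ1]
  have hfin : ∀ t : ℝ, 0 ≤ t → t < 1 → ∀ᵐ ω ∂μ, aspG n ν t (R t ω) ≠ ∞ := by
    intro t ht0 ht1
    have hmc : Measurable fun ω => aspG n ν t (R t ω) :=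
      (measurable_aspG n ν t).comp (hRmeas t ht0)
    have := ae_lt_top hmc (by rw [hkey t ht0 ht1]; exact ENNReal.one_ne_top)
    filter_upwards [this] with ω h
    exact h.ne
  have hofReal : ∀ t : ℝ, 0 ≤ t → t < 1 →
      (fun ω => ENNReal.ofReal (Ψ t (R t ω))) =ᵐ[μ] fun ω => aspG n ν t (R t ω) := by
    intro t ht0 ht1
    filter_upwards [hfin t ht0 ht1] with ω h
    rw [hΨG t _ ht1, ENNReal.ofReal_toReal h]
  have hintΨ : ∀ t : ℝ, 0 ≤ t → t < 1 → Integrable (fun ω => Ψ t (R t ω)) μ := by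
    intro t ht0 ht1
    have heq : (fun ω => Ψ t (R t ω)) = fun ω => (aspG n ν t (R t ω)).toReal :=
      funext fun ω => hΨG t _ ht1
    have hm : Measurable fun ω => Ψ t (R t ω) := by
      rw [heq]
      exact ((measurable_aspG n ν t).comp (hRmeas t ht0)).ennreal_toReal
    refine ⟨hm.aestronglyMeasurable, ?_⟩
    rw [hasFiniteIntegral_iff_ofReal (ae_of_all _ fun ω => hnnΨ t _ ht1)]
    rw [lintegral_congr_ae (hofReal t ht0 ht1), hkey t ht0 ht1]
    exact ENNReal.one_lt_top
  have hSM : ∀ s : ℝ, 0 ≤ s → s < 1 → StronglyMeasurable[ℱ s] (fun ω => Ψ s (R s ω)) := by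
    intro s hs0 hs1
    have heq : (fun ω => Ψ s (R s ω)) = fun ω => (aspG n ν s (R s ω)).toReal :=
      funext fun ω => hΨG s _ hs1
    rw [heq]
    exact (((measurable_aspG n ν s).comp (hRmeasF s hs0)).ennreal_toReal).stronglyMeasurable
  constructor
  · intro s t hs0 hst ht1
    have hs1 : s < 1 := lt_of_le_of_lt hst ht1
    rcases eq_or_lt_of_le hst with heq | hlt
    · subst heq
      rw [condExp_of_stronglyMeasurable (ℱ.le s) (hSM s hs0 ht1) (hintΨ s hs0 ht1)]
    · have hto : 0 ≤ t := le_trans hs0 hst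
      refine (ae_eq_condExp_of_forall_setIntegral_eq (ℱ.le s) (hintΨ t hto ht1)
        (fun A _ _ => (hintΨ s hs0 hs1).integrableOn)
        (fun A hA _ => ?_) (hSM s hs0 hs1).aestronglyMeasurable).symm
      have hAΩ : MeasurableSet A := ℱ.le s A hA
      set Y : Ω → ℝ := fun ω => R t ω - R s ω with hYdef
      have hYmeas : Measurable Y := (hRmeas t hto).sub (hRmeas s hs0)
      have hlawY : Measure.map Y μ = gammaMeasure ((n:ℝ) * (t - s)) 1 := hlaw s t hs0 hlt
      set V : Ω → ℝ × ℝ := fun ω => (A.indicator (fun _ => (1:ℝ)) ω, R s ω) with hVdef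
      have hVmeasF : Measurable[ℱ s] V :=
        (measurable_const.indicator hA).prodMk (hRmeasF s hs0)
      have hVmeas : Measurable V := hVmeasF.mono (ℱ.le s) le_rfl
      have hIndep : IndepFun V Y μ :=
        indep_of_indep_of_le_left (hindep s t hs0 hlt) (measurable_iff_comap_le.1 hVmeasF)
      have hpair : Measure.map (fun ω => (V ω, Y ω)) μ
          = (Measure.map V μ).prod (Measure.map Y μ) :=
        (indepFun_iff_map_prod_eq_prod_map_map hVmeas.aemeasurable hYmeas.aemeasurable).1 hIndep
      set Φ : (ℝ × ℝ) × ℝ → ℝ≥0∞ :=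
        fun p => ENNReal.ofReal p.1.1 * aspG n ν t (p.1.2 + p.2) with hΦdef
      have hΦmeas : Measurable Φ :=
        (measurable_fst.fst.ennreal_ofReal).mul
          ((measurable_aspG n ν t).comp (measurable_fst.snd.add measurable_snd))
      have hΞmeas : Measurable fun v : ℝ × ℝ =>
          ENNReal.ofReal v.1 * aspG n ν s v.2 :=
        (measurable_fst.ennreal_ofReal).mul ((measurable_aspG n ν s).comp measurable_snd)
      have hlhs : ∫⁻ ω in A, aspG n ν t (R t ω) ∂μ = ∫⁻ ω, Φ (V ω, Y ω) ∂μ := by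
        rw [← lintegral_indicator hAΩ]
        refine lintegral_congr fun ω => ?_
        by_cases hω : ω ∈ A
        · rw [Set.indicator_of_mem hω]
          simp only [hΦdef, hVdef, Set.indicator_of_mem hω]
          rw [ENNReal.ofReal_one, one_mul]
          congr 1
          ring
        · rw [Set.indicator_of_notMem hω]
          simp only [hΦdef, hVdef, Set.indicator_of_notMem hω]
          rw [ENNReal.ofReal_zero, zero_mul]
      have hrhs : ∫⁻ ω in A, aspG n ν s (R s ω) ∂μ
          = ∫⁻ ω, ENNReal.ofReal ((V ω).1) * aspG n ν s ((V ω).2) ∂μ := by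
        rw [← lintegral_indicator hAΩ]
        refine lintegral_congr fun ω => ?_
        by_cases hω : ω ∈ A
        · rw [Set.indicator_of_mem hω]
          simp only [hVdef, Set.indicator_of_mem hω]
          rw [ENNReal.ofReal_one, one_mul]
        · rw [Set.indicator_of_notMem hω]
          simp only [hVdef, Set.indicator_of_notMem hω]
          rw [ENNReal.ofReal_zero, zero_mul]
      have hmid : ∫⁻ ω, Φ (V ω, Y ω) ∂μ
          = ∫⁻ ω, ENNReal.ofReal ((V ω).1) * aspG n ν s ((V ω).2) ∂μ := by
        haveI : IsProbabilityMeasure (gammaMeasure ((n:ℝ) * (t - s)) 1) :=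
          isProbabilityMeasure_gammaMeasure (mul_pos hn0 (by linarith)) one_pos
        rw [← lintegral_map hΦmeas (hVmeas.prodMk hYmeas), hpair, hlawY,
          lintegral_prod _ hΦmeas.aemeasurable]
        have hinner : ∀ v : ℝ × ℝ, ∫⁻ y, Φ (v, y) ∂(gammaMeasure ((n:ℝ) * (t - s)) 1)
            = ENNReal.ofReal v.1 * aspG n ν s v.2 := by
          intro v
          have hg : Measurable fun y : ℝ => Φ (v, y) :=
            hΦmeas.comp (measurable_const.prodMk measurable_id)
          rw [gammaMeasure, lintegral_withDensity_eq_lintegral_mul _ (hpdfmeas _ _) hg]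
          have hrearr : (fun y => (gammaPDF ((n:ℝ) * (t - s)) 1 * fun y => Φ (v, y)) y)
              = fun y => ENNReal.ofReal v.1
                  * (gammaPDF ((n:ℝ) * (t - s)) 1 y * aspG n ν t (v.2 + y)) := by
            funext y
            simp only [Pi.mul_apply, hΦdef]
            ring
          have hg2 : Measurable fun y : ℝ =>
              gammaPDF ((n:ℝ) * (t - s)) 1 y * aspG n ν t (v.2 + y) :=
            (hpdfmeas _ _).mul
              ((measurable_aspG n ν t).comp (measurable_const.add measurable_id))
          rw [hrearr, lintegral_const_mul _ hg2, hconv s t hs0 hlt ht1 v.2]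

        rw [lintegral_congr hinner, lintegral_map hΞmeas hVmeas]
      have hBt : ∫ ω in A, Ψ t (R t ω) ∂μ = (∫⁻ ω in A, aspG n ν t (R t ω) ∂μ).toReal := by
        rw [integral_eq_lintegral_of_nonneg_ae (ae_of_all _ fun ω => hnnΨ t _ ht1)
          ((hintΨ t hto ht1).1.restrict)]
        congr 1
        exact lintegral_congr_ae (ae_restrict_of_ae (hofReal t hto ht1))
      have hBs : ∫ ω in A, Ψ s (R s ω) ∂μ = (∫⁻ ω in A, aspG n ν s (R s ω) ∂μ).toReal := by
        rw [integral_eq_lintegral_of_nonneg_ae (ae_of_all _ fun ω => hnnΨ s _ hs1)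
          ((hintΨ s hs0 hs1).1.restrict)]
        congr 1
        exact lintegral_congr_ae (ae_restrict_of_ae (hofReal s hs0 hs1))
      rw [hBt, hBs, hlhs, hmid, hrhs]
  · rw [hΨG 0 0 (by norm_num), aspG_zero n ν hn0, hμ1, ENNReal.toReal_one]

end
end
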